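/- arXiv:1611.04483 — 4 statements merged into one kernel-verified Lean document; each statement's English description precedes it below -/
import Mathlib

section
/- Let A be a skew PBW extension of a ring R. Then for each index i (1 ≤ i ≤ n) there exist an injective ring endomorphism σ_i : R → R and a σ_i-derivation δ_i : R → R such that x_i · r = σ_i(r) · x_i + δ_i(r) for all r ∈ R. -/
open scoped BigOperators

/-- The ordered standard monomial `x₁^{α₁} ⋯ xₙ^{αₙ}`. -/
def monom {A : Type*} [Monoid A] {n : ℕ} (x : Fin n → A) (α : Fin n → ℕ) : A :=
  (List.ofFn fun i => x i ^ α i).prod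

/-- `A` is a free left `R`-module (via the embedding `φ`) with basis the standard monomials:
every element has a unique representation as a finite left `R`-linear combination of the
standard monomials. -/
def IsPBWBasis {R A : Type*} [Ring R] [Ring A] {n : ℕ} (φ : R →+* A) (x : Fin n → A) : Prop :=
  ∀ a : A, ∃! c : (Fin n → ℕ) →₀ R, a = c.sum fun α r => φ r * monom x α

/-- A skew PBW extension `A` of `R` (Definition 2.1), with the defining constants
`cR i r` (for `r ≠ 0`) and `cC i j` recorded as data. -/
structure SkewPBW (R A : Type*) [Ring R] [Ring A] (n : ℕ) where
  /-- the inclusion `R ⊆ A` -/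
  φ : R →+* A
  inj : Function.Injective φ
  /-- the variables `x₁, …, xₙ` -/
  x : Fin n → A
  /-- (ii): `A` is a free left `R`-module with basis the standard monomials -/
  basis : IsPBWBasis φ x
  cR : Fin n → R → R
  cR_ne : ∀ i (r : R), r ≠ 0 → cR i r ≠ 0
  /-- (iii): `xᵢ r − c_{i,r} xᵢ ∈ R` -/
  hR : ∀ i (r : R), r ≠ 0 → ∃ s : R, x i * φ r - φ (cR i r) * x i = φ s
  cC : Fin n → Fin n → R
  cC_ne : ∀ i j, cC i j ≠ 0
  /-- (iv): `xⱼ xᵢ − c_{i,j} xᵢ xⱼ ∈ R + Rx₁ + ⋯ + Rxₙ` -/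
  hC : ∀ i j, ∃ (r0 : R) (r : Fin n → R),
    x j * x i - φ (cC i j) * (x i * x j) = φ r0 + ∑ t, φ (r t) * x t

lemma monom_zero' {A : Type*} [Monoid A] {n : ℕ} (x : Fin n → A) :
    monom x (0 : Fin n → ℕ) = 1 := by
  apply List.prod_eq_one
  intro a ha
  rw [List.mem_ofFn] at ha
  obtain ⟨j, rfl⟩ := ha
  simp

lemma monom_single' {A : Type*} [Monoid A] {n : ℕ} (x : Fin n → A) (i : Fin n) :
    monom x (Pi.single i 1 : Fin n → ℕ) = x i := by
  induction n with
  | zero => exact absurd i.2 (by omega)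
  | succ m ih =>
    rw [monom, List.ofFn_succ, List.prod_cons]
    cases i using Fin.cases with
    | zero =>
      simp only [Pi.single_eq_same, pow_one]
      have h1 : ∀ j : Fin m, (Pi.single (0:Fin (m+1)) 1 : Fin (m+1) → ℕ) j.succ = 0 := by
        intro j; exact Pi.single_eq_of_ne (Fin.succ_ne_zero j) 1
      rw [show (List.ofFn fun j : Fin m => x j.succ ^ (Pi.single (0:Fin (m+1)) 1 : Fin (m+1) → ℕ) j.succ) = List.ofFn fun j : Fin m => (x ∘ Fin.succ) j ^ (0 : Fin m → ℕ) j from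
        congrArg List.ofFn (funext fun j => by rw [h1 j]; rfl)]
      rw [show (List.ofFn fun j : Fin m => (x ∘ Fin.succ) j ^ (0 : Fin m → ℕ) j).prod = monom (x ∘ Fin.succ) (0 : Fin m → ℕ) from rfl,
        monom_zero' (x ∘ Fin.succ), mul_one]
    | succ k =>
      have h0 : (Pi.single (Fin.succ k) 1 : Fin (m+1) → ℕ) 0 = 0 :=
        Pi.single_eq_of_ne (Fin.succ_ne_zero k).symm 1
      rw [h0, pow_zero, one_mul]
      rw [show (List.ofFn fun j : Fin m => x j.succ ^ (Pi.single (Fin.succ k) 1 : Fin (m+1) → ℕ) j.succ) = List.ofFn fun j : Fin m => (x ∘ Fin.succ) j ^ (Pi.single k 1 : Fin m → ℕ) j from by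
        refine congrArg List.ofFn (funext fun j => ?_)
        by_cases hj : j = k
        · subst hj; simp
        · rw [Pi.single_eq_of_ne (fun h => hj (Fin.succ_injective _ h)) 1,
            Pi.single_eq_of_ne hj 1]; rfl]
      exact ih (x ∘ Fin.succ) k

/-- **Proposition 2.2.** If `A` is a skew PBW extension of `R`, then for each `i` there exist
an injective ring endomorphism `σᵢ : R → R` and a `σᵢ`-derivation `δᵢ : R → R` such that
`xᵢ r = σᵢ(r) xᵢ + δᵢ(r)` for all `r ∈ R`. -/
theorem skewPBW_exists_sigma_delta {R A : Type*} [Ring R] [Ring A] {n : ℕ}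
    (E : SkewPBW R A n) (i : Fin n) :
    ∃ (σ : R →+* R) (δ : R → R), Function.Injective σ ∧
      (∀ r s : R, δ (r + s) = δ r + δ s) ∧
      (∀ r s : R, δ (r * s) = σ r * δ s + δ r * s) ∧
      (∀ r : R, E.x i * E.φ r = E.φ (σ r) * E.x i + E.φ (δ r)) := by
  classical
  set p : Fin n → ℕ := Pi.single i 1 with hp
  have hpne : p ≠ 0 := by
    intro h
    have := congrFun h i
    simp [hp] at this
  have hf0 : ∀ α : Fin n → ℕ, E.φ (0:R) * monom E.x α = 0 := by intro α; simp
  have hsum : ∀ u v : R,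
      ((Finsupp.single p u + Finsupp.single 0 v).sum fun α r => E.φ r * monom E.x α)
        = E.φ u * E.x i + E.φ v := by
    intro u v
    rw [Finsupp.sum_add_index' hf0 (fun α r s => by simp [add_mul]),
      Finsupp.sum_single_index (hf0 p), Finsupp.sum_single_index (hf0 0)]
    simp [monom_zero', monom_single', hp]
  -- uniqueness of such representations
  have key : ∀ (a : A) (u v u' v' : R), a = E.φ u * E.x i + E.φ v →
      a = E.φ u' * E.x i + E.φ v' → u = u' ∧ v = v' := by
    intro a u v u' v' h1 h2
    obtain ⟨c, _, hu⟩ := E.basis a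
    have e1 : (Finsupp.single p u + Finsupp.single 0 v) = c :=
      hu _ (show a = (Finsupp.single p u + Finsupp.single 0 v).sum fun α r =>
        E.φ r * monom E.x α by rw [hsum]; exact h1)
    have e2 : (Finsupp.single p u' + Finsupp.single 0 v') = c :=
      hu _ (show a = (Finsupp.single p u' + Finsupp.single 0 v').sum fun α r =>
        E.φ r * monom E.x α by rw [hsum]; exact h2)
    have e3 := e1.trans e2.symm
    constructor
    · have := DFunLike.congr_fun e3 p
      simpa [Finsupp.single_eq_of_ne' (Ne.symm hpne)] using this
    · have := DFunLike.congr_fun e3 0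
      simpa [Finsupp.single_eq_of_ne' hpne] using this
  -- existence of σ₀, δ₀
  have exist : ∀ r : R, ∃ u v : R,
      E.x i * E.φ r = E.φ u * E.x i + E.φ v ∧ (r ≠ 0 → u = E.cR i r) := by
    intro r
    by_cases hr : r = 0
    · exact ⟨0, 0, by simp [hr], fun h => absurd hr h⟩
    · obtain ⟨s, hs⟩ := E.hR i r hr
      exact ⟨E.cR i r, s, sub_eq_iff_eq_add'.mp hs, fun _ => rfl⟩
  choose σ0 δ0 heq hne0 using exist
  have uniq : ∀ r u v : R, E.x i * E.φ r = E.φ u * E.x i + E.φ v →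
      σ0 r = u ∧ δ0 r = v := fun r u v h => key _ _ _ _ _ (heq r) h
  -- ring hom axioms
  have h0 : σ0 0 = 0 ∧ δ0 0 = 0 := uniq 0 0 0 (by simp)
  have h1 : σ0 1 = 1 ∧ δ0 1 = 0 := uniq 1 1 0 (by simp)
  have hadd : ∀ r s : R, σ0 (r + s) = σ0 r + σ0 s ∧ δ0 (r + s) = δ0 r + δ0 s := by
    intro r s
    apply uniq
    rw [map_add, mul_add, heq r, heq s, map_add, map_add]
    noncomm_ring
  have hmul : ∀ r s : R, σ0 (r * s) = σ0 r * σ0 s ∧ δ0 (r * s) = σ0 r * δ0 s + δ0 r * s := by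
    intro r s
    apply uniq
    calc E.x i * E.φ (r * s) = (E.x i * E.φ r) * E.φ s := by rw [map_mul, mul_assoc]
      _ = (E.φ (σ0 r) * E.x i + E.φ (δ0 r)) * E.φ s := by rw [heq r]
      _ = E.φ (σ0 r) * (E.x i * E.φ s) + E.φ (δ0 r) * E.φ s := by noncomm_ring
      _ = E.φ (σ0 r) * (E.φ (σ0 s) * E.x i + E.φ (δ0 s)) + E.φ (δ0 r) * E.φ s := by rw [heq s]
      _ = E.φ (σ0 r * σ0 s) * E.x i + E.φ (σ0 r * δ0 s + δ0 r * s) := by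
          simp only [map_mul, map_add]; noncomm_ring
  refine ⟨{ toFun := σ0, map_one' := h1.1, map_mul' := fun r s => (hmul r s).1,
            map_zero' := h0.1, map_add' := fun r s => (hadd r s).1 }, δ0, ?_, ?_, ?_, ?_⟩
  · -- injectivity
    intro a b hab
    simp only [RingHom.coe_mk, MonoidHom.coe_mk, OneHom.coe_mk] at hab
    by_contra hne
    have hsub : a - b ≠ 0 := sub_ne_zero.mpr hne
    have h2 : σ0 (a - b) = 0 := by
      have h3 := (hadd (a - b) b).1
      rw [sub_add_cancel, hab] at h3
      exact (right_eq_add.mp h3)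
    exact E.cR_ne i _ hsub (by rw [← hne0 _ hsub]; exact h2)
  · exact fun r s => (hadd r s).2
  · exact fun r s => (hmul r s).2
  · exact heq
end

section
/- Let A be a skew PBW extension of R with constants c_{i,r} and c_{i,j}, filtered by total degree as above. Then the associated graded ring Gr(A) = ⊕_m F_m(A)/F_{m−1}(A) is isomorphic to the quasi-commutative skew PBW extension A^σ of R in variables z_1,…,z_n defined by the relations z_i r = c_{i,r} z_i and z_j z_i = c_{i,j} z_i z_j. -/
open scoped BigOperators

/-- The degree filtration of a skew PBW extension, as additive subgroups:
`F m` is the left `R`-span of the standard monomials of total degree `≤ m`. -/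
def degFiltrationAdd {R A : Type*} [Ring R] [Ring A] {n : ℕ} (φ : R →+* A) (x : Fin n → A)
    (m : ℕ) : AddSubgroup A :=
  AddSubgroup.closure {a : A | ∃ (r : R) (α : Fin n → ℕ), (∑ i, α i) ≤ m ∧ a = φ r * monom x α}

/-- `ψ` exhibits the ring `G` as the associated graded ring `Gr(A) = ⊕ₘ F m / F (m-1)` of the
filtration `F` of `A`: the map `ψ m : F m →+ G` sends an element to its degree-`m` symbol; its
kernel is `F (m-1)` (resp. `0` for `m = 0`), the symbols multiply via the multiplication of
representatives, `ψ 0 1 = 1`, and `G` is the (internal) direct sum of the images of the `ψ m`. -/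
structure GrModel {A : Type*} [Ring A] (F : ℕ → AddSubgroup A)
    (hmul : ∀ {i j : ℕ} {a b : A}, a ∈ F i → b ∈ F j → a * b ∈ F (i + j))
    (hone : (1 : A) ∈ F 0) (G : Type*) [Ring G] where
  ψ : ∀ m : ℕ, F m →+ G
  ker_zero : ∀ a : F 0, ψ 0 a = 0 ↔ (a : A) = 0
  ker_succ : ∀ (m : ℕ) (a : F (m + 1)), ψ (m + 1) a = 0 ↔ (a : A) ∈ F m
  mul_symbol : ∀ (i j : ℕ) (a : F i) (b : F j),
    ψ (i + j) ⟨(a : A) * b, hmul a.2 b.2⟩ = ψ i a * ψ j b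
  one_symbol : ψ 0 ⟨1, hone⟩ = 1
  decomp : ∀ g : G, ∃ (N : ℕ) (a : ∀ m, F m), g = ∑ m ∈ Finset.range N, ψ m (a m)
  indep : ∀ (N : ℕ) (a : ∀ m, F m),
    ∑ m ∈ Finset.range N, ψ m (a m) = 0 → ∀ m < N, ψ m (a m) = 0

/-- `A'` (with inclusion `φ'` and variables `z`) is a quasi-commutative skew PBW extension of
`R` with defining constants `cR`, `cC`: the standard monomials form a left `R`-basis and the
defining relations hold exactly, `zᵢ r = c_{i,r} zᵢ` and `zⱼ zᵢ = c_{i,j} zᵢ zⱼ`. -/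
def IsQuasiCommSkewPBW {R A' : Type*} [Ring R] [Ring A'] {n : ℕ} (φ' : R →+* A')
    (z : Fin n → A') (cR : Fin n → R → R) (cC : Fin n → Fin n → R) : Prop :=
  Function.Injective φ' ∧ IsPBWBasis φ' z ∧
    (∀ i (r : R), r ≠ 0 → z i * φ' r = φ' (cR i r) * z i) ∧
    (∀ i j, z j * z i = φ' (cC i j) * (z i * z j))

namespace SPBWAux

/-- product of a word -/
def wp {A : Type*} [Monoid A] {n : ℕ} (x : Fin n → A) (l : List (Fin n)) : A :=
  (l.map x).prod

variable {A : Type*} [Monoid A] {n : ℕ} (x : Fin n → A)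

lemma wp_nil : wp x [] = 1 := rfl

lemma wp_cons (a : Fin n) (l : List (Fin n)) : wp x (a :: l) = x a * wp x l := by
  simp [wp]

lemma monom_eq_map (γ : Fin n → ℕ) :
    monom x γ = ((List.finRange n).map fun j => x j ^ γ j).prod := by
  rw [monom, List.ofFn_eq_map]

lemma monom_zero : monom x (0 : Fin n → ℕ) = 1 := by
  apply List.prod_eq_one
  intro b hb
  rw [List.mem_ofFn] at hb
  obtain ⟨i, rfl⟩ := hb
  simp

/-- pulling a variable into a monomial supported on indices `≥ a`. -/
lemma pull (a : Fin n) (β : Fin n → ℕ) (hβ : ∀ j, j < a → β j = 0) :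
    x a * monom x β = monom x (β + Pi.single a 1) := by
  obtain ⟨s, t, hst⟩ := List.append_of_mem (List.mem_finRange a)
  have hpw : (List.finRange n).Pairwise (· < ·) := List.pairwise_lt_finRange n
  rw [hst] at hpw
  have hs : ∀ j ∈ s, j < a := by
    intro j hj
    exact (List.pairwise_append.1 hpw).2.2 j hj a List.mem_cons_self
  have ht : ∀ j ∈ t, a < j := by
    have := (List.pairwise_append.1 hpw).2.1
    rw [List.pairwise_cons] at this
    exact fun j hj => this.1 j hj
  have hsame : ∀ j ∈ s ++ t, x j ^ (β + Pi.single a 1 : Fin n → ℕ) j = x j ^ β j := by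
    intro j hj
    have hne : j ≠ a := by
      rcases List.mem_append.1 hj with h | h
      · exact ne_of_lt (hs j h)
      · exact ne_of_gt (ht j h)
    simp [Pi.single_apply, hne]
  have hsone : ∀ b ∈ s.map fun j => x j ^ β j, b = 1 := by
    intro b hb
    rw [List.mem_map] at hb
    obtain ⟨j, hj, rfl⟩ := hb
    rw [hβ j (hs j hj), pow_zero]
  rw [monom_eq_map, monom_eq_map, hst]
  simp only [List.map_append, List.map_cons, List.prod_append, List.prod_cons]
  rw [List.prod_eq_one hsone, one_mul]
  have h1 : (s.map fun j => x j ^ (β + Pi.single a 1 : Fin n → ℕ) j).prod = 1 := by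
    apply List.prod_eq_one
    intro b hb
    rw [List.mem_map] at hb
    obtain ⟨j, hj, rfl⟩ := hb
    rw [hsame j (List.mem_append.2 (Or.inl hj)), hβ j (hs j hj), pow_zero]
  rw [h1, one_mul]
  have h2 : (t.map fun j => x j ^ (β + Pi.single a 1 : Fin n → ℕ) j) = t.map fun j => x j ^ β j := by
    apply List.map_congr_left
    intro j hj
    exact hsame j (List.mem_append.2 (Or.inr hj))
  rw [h2]
  have h3 : x a ^ (β + Pi.single a 1 : Fin n → ℕ) a = x a * x a ^ β a := by
    simp [pow_succ']
  rw [h3, mul_assoc]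

lemma monom_single (a : Fin n) : monom x (Pi.single a 1) = x a := by
  have := pull x a 0 (fun j _ => rfl)
  rw [monom_zero, mul_one, zero_add] at this
  exact this.symm

lemma sorted_wp (l : List (Fin n)) (hl : l.Pairwise (· ≤ ·)) :
    wp x l = monom x (fun i => l.count i) := by
  induction l with
  | nil =>
    show (1 : A) = monom x fun i => List.count i []
    simp only [List.count_nil]
    exact (monom_zero x).symm
  | cons a l ih =>
    rw [List.pairwise_cons] at hl
    rw [wp_cons, ih hl.2]
    rw [pull x a _ (fun j hj => by
      rw [List.count_eq_zero]
      intro hmem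
      exact absurd (hl.1 j hmem) (not_le_of_gt hj))]
    congr 1
    funext i
    simp only [Pi.add_apply, Pi.single_apply, List.count_cons]
    by_cases h : i = a
    · simp [h]
    · simp [h, Ne.symm h]


/-- the canonical word of a multidegree -/
def cw (n : ℕ) (α : Fin n → ℕ) : List (Fin n) :=
  (List.finRange n).flatMap fun i => List.replicate (α i) i

lemma count_cw (α : Fin n → ℕ) (i : Fin n) : (cw n α).count i = α i := by
  rw [cw, List.count_flatMap]
  have hc : (List.count i ∘ fun j => List.replicate (α j) j) = fun j => if j = i then α i else 0 := by
    funext j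
    simp only [Function.comp_apply, List.count_replicate]
    by_cases h : i = j
    · subst h; simp
    · simp [h, Ne.symm h]
  rw [hc, ← List.ofFn_eq_map, List.sum_ofFn]
  simp

lemma length_cw (α : Fin n → ℕ) : (cw n α).length = ∑ i, α i := by
  rw [cw, List.length_flatMap]
  have hc : (List.length ∘ fun j : Fin n => List.replicate (α j) j) = α := by
    funext j; simp
  rw [show (fun a => (List.replicate (α a) a).length) = α from hc, ← List.ofFn_eq_map, List.sum_ofFn]

lemma sorted_cw (α : Fin n → ℕ) : (cw n α).Pairwise (· ≤ ·) := by
  rw [cw, List.pairwise_flatMap]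
  constructor
  · intro a _
    exact List.pairwise_replicate.2 (Or.inr le_rfl)
  · apply List.Pairwise.imp (R := (· < ·))
    · intro a b hab p hp q hq
      rw [List.eq_of_mem_replicate hp, List.eq_of_mem_replicate hq]
      exact le_of_lt hab
    · exact List.pairwise_lt_finRange n

lemma wp_cw (α : Fin n → ℕ) : wp x (cw n α) = monom x α := by
  rw [sorted_wp x _ (sorted_cw α)]
  congr 1
  funext i
  exact count_cw α i



section Filt
variable {R A : Type*} [Ring R] [Ring A] {n : ℕ}

/-- `SLow φ x d` : strictly-lower-than-degree-`d` part. -/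
def SLow (φ : R →+* A) (x : Fin n → A) : ℕ → AddSubgroup A
  | 0 => ⊥
  | (m+1) => degFiltrationAdd φ x m

variable (φ : R →+* A) (x : Fin n → A)

lemma gen_mem {m : ℕ} (r : R) (α : Fin n → ℕ) (h : (∑ i, α i) ≤ m) :
    φ r * monom x α ∈ degFiltrationAdd φ x m :=
  AddSubgroup.subset_closure ⟨r, α, h, rfl⟩

lemma phi_mem (r : R) : φ r ∈ degFiltrationAdd φ x 0 := by
  have := gen_mem φ x (m := 0) r 0 (by simp)
  rwa [monom_zero, mul_one] at this

lemma one_mem_F : (1 : A) ∈ degFiltrationAdd φ x 0 := by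
  have := phi_mem φ x 1
  rwa [map_one] at this

lemma x_mem (i : Fin n) : x i ∈ degFiltrationAdd φ x 1 := by
  have := gen_mem φ x (m := 1) 1 (Pi.single i 1) (by simp [Pi.single_apply])
  rwa [map_one, one_mul, monom_single] at this

lemma monom_mem (α : Fin n → ℕ) {m : ℕ} (h : (∑ i, α i) ≤ m) :
    monom x α ∈ degFiltrationAdd φ x m := by
  have := gen_mem φ x 1 α h
  rwa [map_one, one_mul] at this

lemma F_mono : Monotone (degFiltrationAdd φ x) := by
  intro m m' h
  apply AddSubgroup.closure_mono
  rintro a ⟨r, α, hα, rfl⟩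
  exact ⟨r, α, le_trans hα h, rfl⟩

lemma SLow_le (d : ℕ) : SLow φ x d ≤ degFiltrationAdd φ x d := by
  cases d with
  | zero => exact bot_le
  | succ m => exact F_mono φ x (Nat.le_succ m)

lemma SLow_mono : Monotone (SLow φ x) := by
  intro d d' h
  cases d with
  | zero => exact bot_le
  | succ m =>
    cases d' with
    | zero => omega
    | succ m' => exact F_mono φ x (by omega)

variable {φ x}
variable (hmul : ∀ {i j : ℕ} {a b : A}, a ∈ degFiltrationAdd φ x i →
      b ∈ degFiltrationAdd φ x j → a * b ∈ degFiltrationAdd φ x (i + j))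

include hmul

lemma mul_FS {i j : ℕ} {a b : A} (ha : a ∈ degFiltrationAdd φ x i) (hb : b ∈ SLow φ x j) :
    a * b ∈ SLow φ x (i + j) := by
  cases j with
  | zero =>
    rw [SLow, AddSubgroup.mem_bot] at hb
    subst hb
    rw [mul_zero]
    exact zero_mem _
  | succ m =>
    have h : i + (m + 1) = (i + m) + 1 := by omega
    rw [h]
    exact hmul ha hb

lemma mul_SF {i j : ℕ} {a b : A} (ha : a ∈ SLow φ x i) (hb : b ∈ degFiltrationAdd φ x j) :
    a * b ∈ SLow φ x (i + j) := by
  cases i with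
  | zero =>
    rw [SLow, AddSubgroup.mem_bot] at ha
    subst ha
    rw [zero_mul]
    exact zero_mem _
  | succ m =>
    have h : (m + 1) + j = (m + j) + 1 := by omega
    rw [h]
    exact hmul ha hb

end Filt

section Cong
variable {R A : Type*} [Ring R] [Ring A] {n : ℕ} {φ : R →+* A} {x : Fin n → A}

/-- congruence modulo the strictly-lower filtration -/
def Cong (φ : R →+* A) (x : Fin n → A) (d : ℕ) (a b : A) : Prop :=
  a - b ∈ SLow φ x d

lemma cong_of_eq {d : ℕ} {a b : A} (h : a = b) : Cong φ x d a b := by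
  rw [Cong, h, sub_self]; exact zero_mem _

lemma cong_refl {d : ℕ} (a : A) : Cong φ x d a a := cong_of_eq rfl

lemma Cong.trans {d : ℕ} {a b c : A} (h1 : Cong φ x d a b) (h2 : Cong φ x d b c) :
    Cong φ x d a c := by
  have := add_mem h1 h2
  rwa [sub_add_sub_cancel] at this

lemma Cong.mono {d d' : ℕ} {a b : A} (h : Cong φ x d a b) (hd : d ≤ d') : Cong φ x d' a b :=
  SLow_mono φ x hd h

lemma cong_add {d : ℕ} {a a' b b' : A} (h1 : Cong φ x d a a') (h2 : Cong φ x d b b') :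
    Cong φ x d (a + b) (a' + b') := by
  have := add_mem h1 h2
  rwa [show a - a' + (b - b') = a + b - (a' + b') by abel] at this

lemma cong_drop {d : ℕ} {a c : A} (hc : c ∈ SLow φ x d) : Cong φ x d (a + c) a := by
  rw [Cong, add_sub_cancel_left]; exact hc

variable (hmul : ∀ {i j : ℕ} {a b : A}, a ∈ degFiltrationAdd φ x i →
      b ∈ degFiltrationAdd φ x j → a * b ∈ degFiltrationAdd φ x (i + j))

include hmul

lemma cong_mul_left {i j : ℕ} {b a a' : A} (hb : b ∈ degFiltrationAdd φ x i)
    (h : Cong φ x j a a') : Cong φ x (i + j) (b * a) (b * a') := by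
  have := mul_FS hmul hb h
  rwa [mul_sub] at this

lemma cong_mul_right {i j : ℕ} {a a' b : A} (h : Cong φ x i a a')
    (hb : b ∈ degFiltrationAdd φ x j) : Cong φ x (i + j) (a * b) (a' * b) := by
  have := mul_SF hmul h hb
  rwa [sub_mul] at this

end Cong

section Chain
variable {R A A' : Type*} [Ring R] [Ring A] [Ring A'] {n : ℕ}
variable (E : SkewPBW R A n) (φ' : R →+* A') (z : Fin n → A')
variable (hmul : ∀ {i j : ℕ} {a b : A}, a ∈ degFiltrationAdd E.φ E.x i →
      b ∈ degFiltrationAdd E.φ E.x j → a * b ∈ degFiltrationAdd E.φ E.x (i + j))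
variable (hz1 : ∀ i (r : R), r ≠ 0 → z i * φ' r = φ' (E.cR i r) * z i)
variable (hz2 : ∀ i j, z j * z i = φ' (E.cC i j) * (z i * z j))

lemma wp_append {B : Type*} [Monoid B] (y : Fin n → B) (l l' : List (Fin n)) :
    wp y (l ++ l') = wp y l * wp y l' := by
  rw [wp, List.map_append, List.prod_append]; rfl

include hmul

lemma wp_mem (l : List (Fin n)) : wp E.x l ∈ degFiltrationAdd E.φ E.x l.length := by
  induction l with
  | nil => exact one_mem_F E.φ E.x
  | cons a l ih =>
    have := hmul (x_mem E.φ E.x a) ih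
    rw [wp_cons]
    have h : 1 + l.length = (a :: l).length := by simp; omega
    rwa [h] at this

omit hmul

include hz1

lemma scalar_step (i : Fin n) (r : R) : ∃ t w : R,
    E.x i * E.φ r = E.φ t * E.x i + E.φ w ∧ z i * φ' r = φ' t * z i := by
  by_cases hr : r = 0
  · exact ⟨0, 0, by simp [hr], by simp [hr]⟩
  · obtain ⟨s, hs⟩ := E.hR i r hr
    refine ⟨E.cR i r, s, ?_, hz1 i r hr⟩
    have := sub_eq_iff_eq_add.1 hs
    rw [this]; abel

omit hz1
include hmul hz1

lemma scalar_word (l : List (Fin n)) (r : R) : ∃ t : R,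
    Cong E.φ E.x l.length (wp E.x l * E.φ r) (E.φ t * wp E.x l) ∧
    wp z l * φ' r = φ' t * wp z l := by
  induction l with
  | nil =>
    exact ⟨r, cong_of_eq (by rw [wp_nil, one_mul, mul_one]),
      by rw [wp_nil, one_mul, mul_one]⟩
  | cons a l ih =>
    obtain ⟨t, hA, hZ⟩ := ih
    obtain ⟨t', w, hstep, hstepz⟩ := scalar_step E φ' z hz1 a t
    refine ⟨t', ?_, ?_⟩
    · have c1 : Cong E.φ E.x (l.length + 1) (wp E.x (a :: l) * E.φ r)
          (E.x a * (E.φ t * wp E.x l)) := by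
        rw [wp_cons, mul_assoc]
        exact (cong_mul_left hmul (x_mem E.φ E.x a) hA).mono (by omega)
      have heq : E.x a * (E.φ t * wp E.x l)
          = E.φ t' * wp E.x (a :: l) + E.φ w * wp E.x l := by
        rw [wp_cons, ← mul_assoc, hstep]
        noncomm_ring
      have c2 : Cong E.φ E.x (l.length + 1) (E.x a * (E.φ t * wp E.x l))
          (E.φ t' * wp E.x (a :: l)) := by
        rw [heq]
        apply cong_drop
        have := hmul (phi_mem E.φ E.x w) (wp_mem E hmul l)
        rwa [zero_add] at this
      exact (c1.trans c2).mono (by simp)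
    · rw [wp_cons, mul_assoc, hZ, ← mul_assoc, hstepz, mul_assoc, ← wp_cons]

omit hz1
include hmul

omit hmul in
lemma swapA (i j : Fin n) :
    Cong E.φ E.x 2 (E.x j * E.x i) (E.φ (E.cC i j) * (E.x i * E.x j)) := by
  obtain ⟨r0, rr, h⟩ := E.hC i j
  show _ ∈ SLow E.φ E.x 2
  rw [h]
  refine add_mem ?_ (AddSubgroup.sum_mem _ fun t _ => ?_)
  · exact F_mono E.φ E.x (by omega) (phi_mem E.φ E.x r0)
  · have := gen_mem E.φ E.x (m := 1) (rr t) (Pi.single t 1) (by simp [Pi.single_apply])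
    rwa [monom_single] at this

omit hmul
include hmul hz1 hz2

lemma insert_left (s : List (Fin n)) (i : Fin n) : ∃ u : R,
    Cong E.φ E.x (s.length + 1) (E.x i * wp E.x s)
      (E.φ u * wp E.x (List.orderedInsert (· ≤ ·) i s)) ∧
    z i * wp z s = φ' u * wp z (List.orderedInsert (· ≤ ·) i s) := by
  induction s with
  | nil =>
    refine ⟨1, cong_of_eq ?_, ?_⟩ <;>
      simp [wp_nil, wp_cons, List.orderedInsert]
  | cons a s ih =>
    by_cases hia : i ≤ a
    · refine ⟨1, ?_, ?_⟩
      · rw [List.orderedInsert, if_pos hia, map_one, one_mul, wp_cons]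
        exact cong_refl _
      · rw [List.orderedInsert, if_pos hia, map_one, one_mul, wp_cons, wp_cons, wp_cons]
    · obtain ⟨u, hA, hZ⟩ := ih
      obtain ⟨t', w, hstep, hstepz⟩ := scalar_step E φ' z hz1 a u
      have hOI : List.orderedInsert (· ≤ ·) i (a :: s)
          = a :: List.orderedInsert (· ≤ ·) i s := by
        rw [List.orderedInsert, if_neg hia]
      have hlen : (List.orderedInsert (· ≤ ·) i s).length = s.length + 1 :=
        List.orderedInsert_length _ _ _
      refine ⟨E.cC a i * t', ?_, ?_⟩
      · have c1 : Cong E.φ E.x (s.length + 2) (E.x i * wp E.x (a :: s))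
            ((E.φ (E.cC a i) * (E.x a * E.x i)) * wp E.x s) := by
          rw [wp_cons, ← mul_assoc]
          exact (cong_mul_right hmul (swapA E a i) (wp_mem E hmul s)).mono (by omega)
        have c2 : Cong E.φ E.x (s.length + 2)
            ((E.φ (E.cC a i) * (E.x a * E.x i)) * wp E.x s)
            (E.φ (E.cC a i) * (E.x a * (E.φ u * wp E.x (List.orderedInsert (· ≤ ·) i s)))) := by
          have heq : (E.φ (E.cC a i) * (E.x a * E.x i)) * wp E.x s
              = E.φ (E.cC a i) * (E.x a * (E.x i * wp E.x s)) := by noncomm_ring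
          rw [heq]
          have inner := cong_mul_left hmul (x_mem E.φ E.x a) hA
          have outer := cong_mul_left hmul (phi_mem E.φ E.x (E.cC a i)) inner
          exact outer.mono (by omega)
        have c3 : Cong E.φ E.x (s.length + 2)
            (E.φ (E.cC a i) * (E.x a * (E.φ u * wp E.x (List.orderedInsert (· ≤ ·) i s))))
            (E.φ (E.cC a i * t') * wp E.x (List.orderedInsert (· ≤ ·) i (a :: s))) := by
          have heq : E.φ (E.cC a i) * (E.x a * (E.φ u * wp E.x (List.orderedInsert (· ≤ ·) i s)))
              = E.φ (E.cC a i * t') * wp E.x (List.orderedInsert (· ≤ ·) i (a :: s))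
                + E.φ (E.cC a i) * (E.φ w * wp E.x (List.orderedInsert (· ≤ ·) i s)) := by
            rw [hOI, map_mul, wp_cons, ← mul_assoc (E.x a), hstep]
            noncomm_ring
          rw [heq]
          apply cong_drop
          have hw : E.φ w * wp E.x (List.orderedInsert (· ≤ ·) i s)
              ∈ degFiltrationAdd E.φ E.x (s.length + 1) := by
            have := hmul (phi_mem E.φ E.x w) (wp_mem E hmul (List.orderedInsert (· ≤ ·) i s))
            rwa [zero_add, hlen] at this
          have := hmul (phi_mem E.φ E.x (E.cC a i)) hw
          rwa [zero_add] at this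
        have := (c1.trans c2).trans c3
        exact this.mono (by simp)
      · rw [wp_cons, ← mul_assoc, hz2 a i, mul_assoc, mul_assoc, hZ,
          ← mul_assoc (z a), hstepz, hOI, map_mul, wp_cons]
        noncomm_ring

lemma sort_word (l : List (Fin n)) : ∃ t : R,
    Cong E.φ E.x l.length (wp E.x l) (E.φ t * wp E.x (l.insertionSort (· ≤ ·))) ∧
    wp z l = φ' t * wp z (l.insertionSort (· ≤ ·)) := by
  induction l with
  | nil =>
    exact ⟨1, cong_of_eq (by simp [wp_nil]), by simp [wp_nil]⟩
  | cons a l ih =>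
    obtain ⟨t, hA, hZ⟩ := ih
    obtain ⟨u, hIA, hIZ⟩ := insert_left E φ' z hmul hz1 hz2 (l.insertionSort (· ≤ ·)) a
    obtain ⟨t', w, hstep, hstepz⟩ := scalar_step E φ' z hz1 a t
    have hlenS : (l.insertionSort (· ≤ ·)).length = l.length :=
      (List.perm_insertionSort _ l).length_eq
    have hIS : (a :: l).insertionSort (· ≤ ·)
        = List.orderedInsert (· ≤ ·) a (l.insertionSort (· ≤ ·)) := rfl
    refine ⟨t' * u, ?_, ?_⟩
    · have c1 : Cong E.φ E.x (l.length + 1) (wp E.x (a :: l))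
          (E.x a * (E.φ t * wp E.x (l.insertionSort (· ≤ ·)))) := by
        rw [wp_cons]
        exact (cong_mul_left hmul (x_mem E.φ E.x a) hA).mono (by omega)
      have heq : E.x a * (E.φ t * wp E.x (l.insertionSort (· ≤ ·)))
          = E.φ t' * (E.x a * wp E.x (l.insertionSort (· ≤ ·)))
            + E.φ w * wp E.x (l.insertionSort (· ≤ ·)) := by
        rw [← mul_assoc, hstep]
        noncomm_ring
      have c2 : Cong E.φ E.x (l.length + 1)
          (E.x a * (E.φ t * wp E.x (l.insertionSort (· ≤ ·))))
          (E.φ t' * (E.x a * wp E.x (l.insertionSort (· ≤ ·)))) := by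
        rw [heq]
        apply cong_drop
        have := hmul (phi_mem E.φ E.x w) (wp_mem E hmul (l.insertionSort (· ≤ ·)))
        rwa [zero_add, hlenS] at this
      have c3 : Cong E.φ E.x (l.length + 1)
          (E.φ t' * (E.x a * wp E.x (l.insertionSort (· ≤ ·))))
          (E.φ (t' * u) * wp E.x ((a :: l).insertionSort (· ≤ ·))) := by
        have := cong_mul_left hmul (phi_mem E.φ E.x t') hIA
        rw [zero_add, hlenS] at this
        refine this.trans (cong_of_eq ?_)
        rw [map_mul, hIS, mul_assoc]
      have := (c1.trans c2).trans c3
      exact this.mono (by simp)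
    · rw [wp_cons, hZ, ← mul_assoc, hstepz, mul_assoc, hIZ, hIS, map_mul, mul_assoc]

lemma key (α β : Fin n → ℕ) (r s : R) : ∃ t : R,
    Cong E.φ E.x (∑ i, α i + ∑ i, β i)
      ((E.φ r * monom E.x α) * (E.φ s * monom E.x β)) (E.φ t * monom E.x (α + β)) ∧
    (φ' r * monom z α) * (φ' s * monom z β) = φ' t * monom z (α + β) := by
  obtain ⟨t1, hA1, hZ1⟩ := scalar_word E φ' z hmul hz1 (cw n α) s
  obtain ⟨t2, hA2, hZ2⟩ := sort_word E φ' z hmul hz1 hz2 (cw n α ++ cw n β)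
  have hlen1 : (cw n α).length = ∑ i, α i := length_cw α
  have hlen2 : (cw n α ++ cw n β).length = ∑ i, α i + ∑ i, β i := by
    rw [List.length_append, length_cw, length_cw]
  have hsum : (∑ i, (α + β) i) = ∑ i, α i + ∑ i, β i := by
    simp [Finset.sum_add_distrib]
  have hsorted : wp E.x ((cw n α ++ cw n β).insertionSort (· ≤ ·)) = monom E.x (α + β) := by
    rw [sorted_wp E.x _ (List.pairwise_insertionSort _ _)]
    congr 1
    funext i
    rw [(List.perm_insertionSort _ _).count_eq i, List.count_append, count_cw, count_cw]
    simp
  have hsortedz : wp z ((cw n α ++ cw n β).insertionSort (· ≤ ·)) = monom z (α + β) := by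
    rw [sorted_wp z _ (List.pairwise_insertionSort _ _)]
    congr 1
    funext i
    rw [(List.perm_insertionSort _ _).count_eq i, List.count_append, count_cw, count_cw]
    simp
  rw [wp_cw, hlen1] at hA1
  rw [wp_cw] at hZ1
  rw [hlen2, hsorted] at hA2
  rw [hsortedz] at hZ2
  rw [wp_append, wp_cw, wp_cw] at hA2
  rw [wp_append, wp_cw, wp_cw] at hZ2
  refine ⟨r * t1 * t2, ?_, ?_⟩
  · have c1 : Cong E.φ E.x (∑ i, α i + ∑ i, β i)
        ((E.φ r * monom E.x α) * (E.φ s * monom E.x β))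
        (E.φ r * ((E.φ t1 * monom E.x α) * monom E.x β)) := by
      have heq : (E.φ r * monom E.x α) * (E.φ s * monom E.x β)
          = E.φ r * ((monom E.x α * E.φ s) * monom E.x β) := by noncomm_ring
      rw [heq]
      have inner := cong_mul_right hmul hA1 (monom_mem E.φ E.x β le_rfl)
      have outer := cong_mul_left hmul (phi_mem E.φ E.x r) inner
      exact outer.mono (by omega)
    have c2 : Cong E.φ E.x (∑ i, α i + ∑ i, β i)
        (E.φ r * ((E.φ t1 * monom E.x α) * monom E.x β))
        (E.φ (r * t1 * t2) * monom E.x (α + β)) := by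
      have heq : E.φ r * ((E.φ t1 * monom E.x α) * monom E.x β)
          = E.φ (r * t1) * (monom E.x α * monom E.x β) := by
        rw [map_mul]; noncomm_ring
      rw [heq]
      have := cong_mul_left hmul (phi_mem E.φ E.x (r * t1)) hA2
      rw [zero_add] at this
      refine this.trans (cong_of_eq ?_)
      simp only [map_mul]
      noncomm_ring
    exact c1.trans c2
  · have heq : (φ' r * monom z α) * (φ' s * monom z β)
        = φ' r * ((monom z α * φ' s) * monom z β) := by noncomm_ring
    rw [heq, hZ1, map_mul, map_mul]
    rw [show φ' r * ((φ' t1 * monom z α) * monom z β)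
        = (φ' r * φ' t1) * (monom z α * monom z β) by noncomm_ring, hZ2]
    noncomm_ring

end Chain

section GSide
variable {R A G : Type*} [Ring R] [Ring A] [Ring G] {n : ℕ} {φ : R →+* A} {x : Fin n → A}
  {hmul : ∀ {i j : ℕ} {a b : A}, a ∈ degFiltrationAdd φ x i →
      b ∈ degFiltrationAdd φ x j → a * b ∈ degFiltrationAdd φ x (i + j)}
  {hone : (1 : A) ∈ degFiltrationAdd φ x 0}
  (M : GrModel (degFiltrationAdd φ x) hmul hone G)

lemma psi_ext {d : ℕ} {a b : A} (ha : a ∈ degFiltrationAdd φ x d)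
    (hb : b ∈ degFiltrationAdd φ x d) (h : a = b) : M.ψ d ⟨a, ha⟩ = M.ψ d ⟨b, hb⟩ := by
  subst h; rfl

lemma psi_congr {d d' : ℕ} (h : d = d') {a : A} (ha : a ∈ degFiltrationAdd φ x d)
    (ha' : a ∈ degFiltrationAdd φ x d') : M.ψ d ⟨a, ha⟩ = M.ψ d' ⟨a, ha'⟩ := by
  subst h; rfl

lemma psi_add {d : ℕ} {u v : A} (hu : u ∈ degFiltrationAdd φ x d)
    (hv : v ∈ degFiltrationAdd φ x d) :
    M.ψ d ⟨u + v, add_mem hu hv⟩ = M.ψ d ⟨u, hu⟩ + M.ψ d ⟨v, hv⟩ := by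
  rw [← map_add]
  congr 1

lemma psi_vanish {d : ℕ} {a : A} (ha : a ∈ degFiltrationAdd φ x d)
    (h : a ∈ SLow φ x d) : M.ψ d ⟨a, ha⟩ = 0 := by
  cases d with
  | zero =>
    refine (M.ker_zero ⟨a, ha⟩).2 ?_
    rwa [SLow, AddSubgroup.mem_bot] at h
  | succ m => exact (M.ker_succ m ⟨a, ha⟩).2 h

lemma psi_vanish_iff {d : ℕ} {a : A} (ha : a ∈ degFiltrationAdd φ x d) :
    M.ψ d ⟨a, ha⟩ = 0 ↔ a ∈ SLow φ x d := by
  refine ⟨fun h => ?_, psi_vanish M ha⟩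
  cases d with
  | zero =>
    rw [SLow, AddSubgroup.mem_bot]
    exact (M.ker_zero ⟨a, ha⟩).1 h
  | succ m => exact (M.ker_succ m ⟨a, ha⟩).1 h

/-- the degree-`|α|` symbol of `φ r * x^α` -/
def symb (r : R) (α : Fin n → ℕ) : G :=
  M.ψ (∑ i, α i) ⟨φ r * monom x α, gen_mem φ x r α le_rfl⟩

lemma symb_zero (α : Fin n → ℕ) : symb M 0 α = 0 := by
  rw [symb]
  have h0 : (⟨φ (0 : R) * monom x α, gen_mem φ x 0 α le_rfl⟩ :
      degFiltrationAdd φ x (∑ i, α i)) = 0 := Subtype.ext (by simp)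
  rw [h0, map_zero]

lemma symb_add (r r' : R) (α : Fin n → ℕ) :
    symb M (r + r') α = symb M r α + symb M r' α := by
  rw [symb, symb, symb, ← psi_add M (gen_mem φ x r α le_rfl) (gen_mem φ x r' α le_rfl)]
  exact psi_ext M _ _ (by rw [map_add, add_mul])

end GSide

section SymbMul
variable {R A A' G : Type*} [Ring R] [Ring A] [Ring A'] [Ring G] {n : ℕ}
variable (E : SkewPBW R A n) (φ' : R →+* A') (z : Fin n → A')
variable {hmul : ∀ {i j : ℕ} {a b : A}, a ∈ degFiltrationAdd E.φ E.x i →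
      b ∈ degFiltrationAdd E.φ E.x j → a * b ∈ degFiltrationAdd E.φ E.x (i + j)}
variable {hone : (1 : A) ∈ degFiltrationAdd E.φ E.x 0}
variable (M : GrModel (degFiltrationAdd E.φ E.x) hmul hone G)
variable (hz1 : ∀ i (r : R), r ≠ 0 → z i * φ' r = φ' (E.cR i r) * z i)
variable (hz2 : ∀ i j, z j * z i = φ' (E.cC i j) * (z i * z j))

include hz1 hz2 in
lemma symb_mul (α β : Fin n → ℕ) (r s : R) : ∃ t : R,
    symb M r α * symb M s β = symb M t (α + β) ∧
    (φ' r * monom z α) * (φ' s * monom z β) = φ' t * monom z (α + β) := by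
  obtain ⟨t, hA, hZ⟩ := key E φ' z (fun hi hj => hmul hi hj) hz1 hz2 α β r s
  refine ⟨t, ?_, hZ⟩
  have hsum : (∑ i, (α + β) i) = ∑ i, α i + ∑ i, β i := by
    simp [Finset.sum_add_distrib]
  rw [symb, symb, ← M.mul_symbol]
  -- decompose the product
  have hmemP : (E.φ r * monom E.x α) * (E.φ s * monom E.x β)
      ∈ degFiltrationAdd E.φ E.x (∑ i, α i + ∑ i, β i) :=
    hmul (gen_mem E.φ E.x r α le_rfl) (gen_mem E.φ E.x s β le_rfl)
  have hmemL : E.φ t * monom E.x (α + β)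
      ∈ degFiltrationAdd E.φ E.x (∑ i, α i + ∑ i, β i) :=
    gen_mem E.φ E.x t (α + β) (le_of_eq hsum)
  have hmemD : (E.φ r * monom E.x α) * (E.φ s * monom E.x β) - E.φ t * monom E.x (α + β)
      ∈ degFiltrationAdd E.φ E.x (∑ i, α i + ∑ i, β i) :=
    SLow_le E.φ E.x _ hA
  have hdec : (E.φ r * monom E.x α) * (E.φ s * monom E.x β)
      = E.φ t * monom E.x (α + β)
        + ((E.φ r * monom E.x α) * (E.φ s * monom E.x β) - E.φ t * monom E.x (α + β)) := by
    abel
  rw [psi_ext M _ (by rw [← hdec]; exact hmemP) hdec, psi_add M hmemL hmemD,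
    psi_vanish M hmemD hA, add_zero, symb,
    psi_congr M hsum (gen_mem E.φ E.x t (α + β) le_rfl) hmemL]

end SymbMul

section Coeff
variable {R B : Type*} [Ring R] [Ring B] {n : ℕ} (ψb : R →+* B) (y : Fin n → B)
  (hb : IsPBWBasis ψb y)

/-- the coefficients of `a` in the standard-monomial basis -/
noncomputable def coeffs (a : B) : (Fin n → ℕ) →₀ R := (hb a).choose

lemma coeffs_spec (a : B) : a = (coeffs ψb y hb a).sum fun α r => ψb r * monom y α :=
  (hb a).choose_spec.1

lemma coeffs_eq {a : B} {d : (Fin n → ℕ) →₀ R}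
    (hd : a = d.sum fun α r => ψb r * monom y α) : d = coeffs ψb y hb a :=
  (hb a).choose_spec.2 d hd

lemma coeffs_single (r : R) (α : Fin n → ℕ) :
    coeffs ψb y hb (ψb r * monom y α) = Finsupp.single α r :=
  (coeffs_eq ψb y hb (Finsupp.sum_single_index (by simp)).symm).symm

lemma coeffs_zero : coeffs ψb y hb 0 = 0 :=
  (coeffs_eq ψb y hb Finsupp.sum_zero_index.symm).symm

lemma coeffs_add (a b : B) :
    coeffs ψb y hb (a + b) = coeffs ψb y hb a + coeffs ψb y hb b := by
  refine (coeffs_eq ψb y hb ?_).symm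
  rw [Finsupp.sum_add_index' (by simp) (by intro a r1 r2; rw [map_add, add_mul])]
  rw [← coeffs_spec ψb y hb a, ← coeffs_spec ψb y hb b]

lemma coeffs_neg (a : B) : coeffs ψb y hb (-a) = - coeffs ψb y hb a := by
  refine (coeffs_eq ψb y hb ?_).symm
  rw [Finsupp.sum_neg_index (by simp)]
  have : (coeffs ψb y hb a).sum (fun α r => ψb (-r) * monom y α)
      = (coeffs ψb y hb a).sum fun α r => -(ψb r * monom y α) := by
    apply Finsupp.sum_congr
    intro α _
    rw [map_neg, neg_mul]
  rw [this, Finsupp.sum_neg, ← coeffs_spec ψb y hb a]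

lemma coeffs_support_le (m : ℕ) {a : B} (ha : a ∈ degFiltrationAdd ψb y m) :
    ∀ α ∈ (coeffs ψb y hb a).support, (∑ i, α i) ≤ m := by
  classical
  induction ha using AddSubgroup.closure_induction with
  | mem w hw =>
    obtain ⟨r, α0, hα0, rfl⟩ := hw
    rw [coeffs_single]
    intro α hα
    have := Finsupp.support_single_subset hα
    rw [Finset.mem_singleton] at this
    subst this
    exact hα0
  | zero =>
    rw [coeffs_zero]
    simp
  | add u v hu hv ihu ihv =>
    rw [coeffs_add]
    intro α hα
    rcases Finset.mem_union.1 (Finsupp.support_add hα) with h | h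
    · exact ihu α h
    · exact ihv α h
  | neg u hu ihu =>
    rw [coeffs_neg, Finsupp.support_neg]
    exact ihu

lemma coeffs_support_lt (m : ℕ) {a : B} (ha : a ∈ SLow ψb y m) :
    ∀ α ∈ (coeffs ψb y hb a).support, (∑ i, α i) < m := by
  cases m with
  | zero =>
    have h0 : a = 0 := AddSubgroup.mem_bot.1 ha
    subst h0
    rw [coeffs_zero]
    simp
  | succ m' =>
    intro α hα
    exact Nat.lt_succ_of_le (coeffs_support_le ψb y hb m' ha α hα)

end Coeff
end SPBWAux

open SPBWAux in
/-- **Theorem 2.5.**  Let `A` be a skew PBW extension of `R` with defining constants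
`c_{i,r}`, `c_{i,j}`, filtered by total degree.  Then the associated graded ring `Gr(A)`
is isomorphic to the quasi-commutative skew PBW extension `A^σ` of `R` in variables
`z₁,…,zₙ` defined by the relations `zᵢ r = c_{i,r} zᵢ` and `zⱼ zᵢ = c_{i,j} zᵢ zⱼ`. -/
theorem skewPBW_gr_iso_quasiComm {R A : Type*} [Ring R] [Ring A] {n : ℕ}
    (E : SkewPBW R A n)
    (hmul : ∀ {i j : ℕ} {a b : A}, a ∈ degFiltrationAdd E.φ E.x i →
      b ∈ degFiltrationAdd E.φ E.x j → a * b ∈ degFiltrationAdd E.φ E.x (i + j))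
    (hone : (1 : A) ∈ degFiltrationAdd E.φ E.x 0)
    -- `G` is (a model of) the associated graded ring of `A`
    {G : Type*} [Ring G] (_ : GrModel (degFiltrationAdd E.φ E.x) hmul hone G)
    -- `A'` is the quasi-commutative skew PBW extension `A^σ` with the same constants
    {A' : Type*} [Ring A'] (φ' : R →+* A') (z : Fin n → A')
    (_ : IsQuasiCommSkewPBW φ' z E.cR E.cC) :
    Nonempty (A' ≃+* G) := by
  classical
  rename_i instG M instA' hQ
  obtain ⟨hinj', hbasis', hz1, hz2⟩ := hQ
  -- the coefficient map on `A'` and the candidate map `θ : A' → G`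
  set c' : A' → ((Fin n → ℕ) →₀ R) := fun a => coeffs φ' z hbasis' a with hc'
  set θ : A' → G := fun a => (c' a).sum fun α r => symb M r α with hθ
  have hθ_single : ∀ (r : R) (α : Fin n → ℕ), θ (φ' r * monom z α) = symb M r α := by
    intro r α
    show (c' (φ' r * monom z α)).sum _ = _
    rw [show c' (φ' r * monom z α) = Finsupp.single α r from coeffs_single φ' z hbasis' r α]
    exact Finsupp.sum_single_index (symb_zero M α)
  have hθ_add : ∀ a b : A', θ (a + b) = θ a + θ b := by
    intro a b
    show (c' (a + b)).sum _ = _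
    rw [show c' (a + b) = c' a + c' b from coeffs_add φ' z hbasis' a b]
    exact Finsupp.sum_add_index' (fun α => symb_zero M α)
      (fun α r1 r2 => symb_add M r1 r2 α)
  have hθ_zero : θ 0 = 0 := by
    show (c' 0).sum _ = 0
    rw [show c' (0 : A') = 0 from coeffs_zero φ' z hbasis']
    exact Finsupp.sum_zero_index
  set Θ : A' →+ G := AddMonoidHom.mk' θ hθ_add with hΘ
  have hΘcoe : ∀ a : A', Θ a = θ a := fun _ => rfl
  have hθ_one : θ 1 = 1 := by
    have h1 : (1 : A') = φ' 1 * monom z 0 := by rw [map_one, monom_zero, one_mul]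
    rw [h1, hθ_single, symb]
    have hsum0 : (∑ i, (0 : Fin n → ℕ) i) = 0 := by simp
    have hmem0 : E.φ (1 : R) * monom E.x 0 ∈ degFiltrationAdd E.φ E.x 0 :=
      gen_mem E.φ E.x 1 0 (by simp)
    rw [psi_congr M hsum0 (gen_mem E.φ E.x 1 0 le_rfl) hmem0,
      psi_ext M hmem0 hone (by rw [map_one, monom_zero, one_mul])]
    exact M.one_symbol
  have hθ_mul : ∀ a b : A', θ (a * b) = θ a * θ b := by
    intro a b
    have hab : a * b = ∑ α ∈ (c' a).support, ∑ β ∈ (c' b).support,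
        (φ' (c' a α) * monom z α) * (φ' (c' b β) * monom z β) := by
      conv_lhs => rw [coeffs_spec φ' z hbasis' a, coeffs_spec φ' z hbasis' b]
      rw [Finsupp.sum, Finsupp.sum, Finset.sum_mul_sum]
    have hθsum : ∀ {ι : Type} (s : Finset ι) (f : ι → A'),
        θ (∑ i ∈ s, f i) = ∑ i ∈ s, θ (f i) := by
      intro ι s f
      rw [← hΘcoe, map_sum]
      rfl
    rw [hab, hθsum]
    have hterm : ∀ α β, θ ((φ' (c' a α) * monom z α) * (φ' (c' b β) * monom z β))
        = symb M (c' a α) α * symb M (c' b β) β := by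
      intro α β
      obtain ⟨t, hGt, hZt⟩ := symb_mul E φ' z M hz1 hz2 α β (c' a α) (c' b β)
      rw [hZt, hθ_single, hGt]
    calc ∑ α ∈ (c' a).support, θ (∑ β ∈ (c' b).support,
            (φ' (c' a α) * monom z α) * (φ' (c' b β) * monom z β))
        = ∑ α ∈ (c' a).support, ∑ β ∈ (c' b).support,
            symb M (c' a α) α * symb M (c' b β) β := by
          refine Finset.sum_congr rfl fun α _ => ?_
          rw [hθsum]
          exact Finset.sum_congr rfl fun β _ => hterm α β
      _ = θ a * θ b := by
          rw [← Finset.sum_mul_sum]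
          rfl
  -- surjectivity
  have hsurj : Function.Surjective θ := by
    intro g
    obtain ⟨N, a, rfl⟩ := M.decomp g
    have hrange : ∀ (m : ℕ) (w : A) (hw : w ∈ degFiltrationAdd E.φ E.x m),
        ∃ p : A', θ p = M.ψ m ⟨w, hw⟩ := by
      intro m w hw
      induction hw using AddSubgroup.closure_induction with
      | mem w hw =>
        obtain ⟨r, α, hα, rfl⟩ := hw
        rcases eq_or_lt_of_le hα with heq | hlt
        · refine ⟨φ' r * monom z α, ?_⟩
          rw [hθ_single, symb]
          exact psi_congr M heq _ _
        · refine ⟨0, ?_⟩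
          rw [hθ_zero]
          refine (psi_vanish M _ ?_).symm
          cases m with
          | zero => omega
          | succ m' => exact gen_mem E.φ E.x r α (by omega)
      | zero =>
        refine ⟨0, ?_⟩
        rw [hθ_zero]
        have h0 : (⟨(0 : A), zero_mem _⟩ : degFiltrationAdd E.φ E.x m) = 0 :=
          Subtype.ext rfl
        rw [h0, map_zero]
      | add u v hu hv ihu ihv =>
        obtain ⟨p, hp⟩ := ihu
        obtain ⟨q, hq⟩ := ihv
        refine ⟨p + q, ?_⟩
        rw [hθ_add, hp, hq, ← map_add]
        congr 1
      | neg u hu ihu =>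
        obtain ⟨p, hp⟩ := ihu
        refine ⟨-p, ?_⟩
        have hnegθ : θ (-p) = -θ p := by
          rw [← hΘcoe, ← hΘcoe, map_neg]
        rw [hnegθ, hp, ← map_neg]
        congr 1
    choose p hp using fun m => hrange m (a m).1 (a m).2
    refine ⟨∑ m ∈ Finset.range N, p m, ?_⟩
    have : θ (∑ m ∈ Finset.range N, p m) = ∑ m ∈ Finset.range N, θ (p m) := by
      rw [← hΘcoe, map_sum]
      rfl
    rw [this]
    exact Finset.sum_congr rfl fun m _ => by rw [hp m]
  -- injectivity
  have hinj : Function.Injective θ := by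
    have : Function.Injective Θ := by
      rw [injective_iff_map_eq_zero]
      intro a ha
      rw [hΘcoe] at ha
      have hrepr := coeffs_spec φ' z hbasis' a
      suffices hcz : c' a = 0 by
        rw [hrepr, show coeffs φ' z hbasis' a = c' a from rfl, hcz, Finsupp.sum_zero_index]
      set c := c' a with hc
      set N := (c.support.sup fun α => ∑ i, α i) + 1 with hN
      have hdegN : ∀ α ∈ c.support, (∑ i, α i) < N :=
        fun α hα => Nat.lt_succ_of_le (Finset.le_sup hα)
      have hbmem : ∀ m : ℕ,
          (∑ α ∈ c.support.filter (fun α => (∑ i, α i) = m), E.φ (c α) * monom E.x α)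
            ∈ degFiltrationAdd E.φ E.x m := fun m =>
        AddSubgroup.sum_mem _ fun α hα =>
          gen_mem E.φ E.x _ _ (le_of_eq (Finset.mem_filter.1 hα).2)
      set b : ∀ m : ℕ, degFiltrationAdd E.φ E.x m := fun m => ⟨_, hbmem m⟩ with hb
      have hpsib : ∀ m, M.ψ m (b m)
          = ∑ α ∈ c.support.filter (fun α => (∑ i, α i) = m), symb M (c α) α := by
        intro m
        have hmemS : ∀ α : {α // α ∈ c.support.filter (fun α => (∑ i, α i) = m)},
            E.φ (c α.1) * monom E.x α.1 ∈ degFiltrationAdd E.φ E.x m :=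
          fun α => gen_mem E.φ E.x _ _ (le_of_eq (Finset.mem_filter.1 α.2).2)
        have hsplit : b m = ∑ α ∈ (c.support.filter (fun α => (∑ i, α i) = m)).attach,
            (⟨E.φ (c α.1) * monom E.x α.1, hmemS α⟩ : degFiltrationAdd E.φ E.x m) := by
          apply Subtype.ext
          rw [AddSubmonoidClass.coe_finset_sum]
          show ∑ α ∈ c.support.filter (fun α => (∑ i, α i) = m), E.φ (c α) * monom E.x α = _
          rw [← Finset.sum_attach (c.support.filter (fun α => (∑ i, α i) = m))
            (fun α => E.φ (c α) * monom E.x α)]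
        rw [hsplit, map_sum, ← Finset.sum_attach (c.support.filter (fun α => (∑ i, α i) = m))
          (fun α => symb M (c α) α)]
        refine Finset.sum_congr rfl fun α _ => ?_
        rw [symb]
        exact psi_congr M ((Finset.mem_filter.1 α.2).2).symm _ _
      have htotal : ∑ m ∈ Finset.range N, M.ψ m (b m) = 0 := by
        have h1 : ∑ m ∈ Finset.range N, M.ψ m (b m)
            = ∑ m ∈ Finset.range N, ∑ α ∈ c.support.filter (fun α => (∑ i, α i) = m),
              symb M (c α) α :=
          Finset.sum_congr rfl fun m _ => hpsib m
        rw [h1, Finset.sum_fiberwise_of_maps_to (fun α hα => Finset.mem_range.2 (hdegN α hα))]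
        exact ha
      have hvanish := M.indep N b htotal
      -- coefficients of `b m`
      set Dm : ℕ → ((Fin n → ℕ) →₀ R) := fun m =>
        ∑ α ∈ c.support.filter (fun α => (∑ i, α i) = m), Finsupp.single α (c α) with hDm
      have hdmrep : ∀ m, (b m : A) = (Dm m).sum fun α r => E.φ r * monom E.x α := by
        intro m
        rw [hDm, ← Finsupp.sum_finset_sum_index (by simp)
          (by intro a r1 r2; rw [map_add, add_mul])]
        refine Finset.sum_congr rfl fun α _ => ?_
        rw [Finsupp.sum_single_index (by simp)]
      have hdmc : ∀ m, Dm m = coeffs E.φ E.x E.basis (b m : A) :=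
        fun m => coeffs_eq E.φ E.x E.basis (hdmrep m)
      have hzero : ∀ m < N, ∀ α ∈ c.support, (∑ i, α i) = m → False := by
        intro m hmN α hαs hαm
        have hcα : c α ≠ 0 := Finsupp.mem_support_iff.1 hαs
        have hdmα : Dm m α = c α := by
          rw [hDm, Finsupp.finset_sum_apply, Finset.sum_eq_single α]
          · rw [Finsupp.single_eq_same]
          · intro β _ hne2
            rw [Finsupp.single_eq_of_ne' hne2]
          · intro hnm
            exact absurd (Finset.mem_filter.2 ⟨hαs, hαm⟩) hnm
        have h0 := hvanish m hmN
        have hlow : (b m : A) ∈ SLow E.φ E.x m := (psi_vanish_iff M (hbmem m)).1 h0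
        have hsup : α ∈ (coeffs E.φ E.x E.basis (b m : A)).support := by
          rw [← hdmc]
          exact Finsupp.mem_support_iff.2 (by rw [hdmα]; exact hcα)
        have hlt := coeffs_support_lt E.φ E.x E.basis m hlow α hsup
        rw [hαm] at hlt
        exact lt_irrefl m hlt
      refine Finsupp.ext fun α => ?_
      by_contra hne
      have hαsup : α ∈ c.support := Finsupp.mem_support_iff.2 (by
        simpa using hne)
      exact hzero (∑ i, α i) (hdegN α hαsup) α hαsup rfl
    exact fun a b hab => this (by rw [hΘcoe, hΘcoe]; exact hab)
  exact ⟨RingEquiv.ofBijective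
    ({ toFun := θ, map_one' := hθ_one, map_mul' := hθ_mul,
       map_zero' := hθ_zero, map_add' := hθ_add } : A' →+* G) ⟨hinj, hsurj⟩⟩
end

section
/- Let A be a constant skew PBW extension of a field K, presented as A = K⟨x_1,…,x_n⟩/⟨P⟩ with P spanned by elements x_j x_i − c_{i,j} x_i x_j + r_0 + r_1 x_1 + ⋯ + r_n x_n (c_{i,j} ∈ K nonzero, r_t ∈ K), and let B = K⟨x_1,…,x_n⟩/⟨x_j x_i − c_{i,j} x_i x_j⟩ be its homogeneous version. Then A is a PBW deformation of B: the natural graded algebra map p : B → Gr(A) induced by the projection is an isomorphism. -/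
/-- The defining relations of a constant skew PBW extension of `K`:
`xⱼxᵢ = c_{ij} xᵢxⱼ − r₀ − Σₜ rₜ xₜ` for `i < j`. -/
def constExtRel (K : Type*) [Field K] (n : ℕ) (c : Fin n → Fin n → K)
    (k0 : Fin n → Fin n → K) (kl : Fin n → Fin n → Fin n → K) :
    FreeAlgebra K (Fin n) → FreeAlgebra K (Fin n) → Prop :=
  fun u v => ∃ i j : Fin n, i < j ∧ u = FreeAlgebra.ι K j * FreeAlgebra.ι K i ∧
    v = c i j • (FreeAlgebra.ι K i * FreeAlgebra.ι K j) -
        algebraMap K (FreeAlgebra K (Fin n)) (k0 i j) - ∑ t, kl i j t • FreeAlgebra.ι K t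

/-- The relations of the homogeneous version `B`: `xⱼxᵢ = c_{ij} xᵢxⱼ` for `i < j`. -/
def homogRel (K : Type*) [Field K] (n : ℕ) (c : Fin n → Fin n → K) :
    FreeAlgebra K (Fin n) → FreeAlgebra K (Fin n) → Prop :=
  fun u v => ∃ i j : Fin n, i < j ∧ u = FreeAlgebra.ι K j * FreeAlgebra.ι K i ∧
    v = c i j • (FreeAlgebra.ι K i * FreeAlgebra.ι K j)

/-- The degree filtration on a quotient of the free algebra: `F m` is the span of the images
of the words of length `≤ m`. -/
def quotDegFiltration (K : Type*) [Field K] (n : ℕ)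
    (rel : FreeAlgebra K (Fin n) → FreeAlgebra K (Fin n) → Prop) (m : ℕ) :
    AddSubgroup (RingQuot rel) :=
  AddSubgroup.closure {a | ∃ (k : K) (l : List (Fin n)), l.length ≤ m ∧
    a = k • (l.map fun i => RingQuot.mkAlgHom K rel (FreeAlgebra.ι K i)).prod}

namespace PBWAux


variable {n : ℕ}

/-- word -/
def wd {R : Type*} [Monoid R] (x : Fin n → R) (l : List (Fin n)) : R := (l.map x).prod

def toWord (α : Fin n → ℕ) : List (Fin n) := (List.ofFn fun i => List.replicate (α i) i).flatten

theorem wd_nil {R : Type*} [Monoid R] (x : Fin n → R) : wd x [] = 1 := rfl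

theorem wd_append {R : Type*} [Monoid R] (x : Fin n → R) (l₁ l₂ : List (Fin n)) :
    wd x (l₁ ++ l₂) = wd x l₁ * wd x l₂ := by
  simp [wd]

theorem wd_cons {R : Type*} [Monoid R] (x : Fin n → R) (i : Fin n) (l : List (Fin n)) :
    wd x (i :: l) = x i * wd x l := by
  simp [wd]

theorem monom_eq_wd_toWord {R : Type*} [Monoid R] (x : Fin n → R) (α : Fin n → ℕ) :
    monom x α = wd x (toWord α) := by
  simp only [monom, wd, toWord, List.map_flatten, List.map_ofFn, List.prod_flatten,
    Function.comp_def, List.map_replicate, List.prod_replicate]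

theorem length_toWord (α : Fin n → ℕ) : (toWord α).length = ∑ i, α i := by
  simp [toWord, List.length_flatten, List.map_ofFn, Function.comp_def, List.sum_ofFn]

theorem count_toWord (α : Fin n → ℕ) (j : Fin n) : (toWord α).count j = α j := by
  simp only [toWord, List.count_flatten, List.map_ofFn, Function.comp_def,
    List.count_replicate, List.sum_ofFn]
  simp only [beq_iff_eq]
  rw [Finset.sum_ite_eq' Finset.univ j α]
  simp

theorem sorted_toWord (α : Fin n → ℕ) : (toWord α).Pairwise (· ≤ ·) := by
  rw [toWord, List.pairwise_flatten]
  constructor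
  · intro l hl
    simp only [List.mem_ofFn] at hl
    obtain ⟨i, rfl⟩ := hl
    rw [List.pairwise_replicate]
    exact Or.inr le_rfl
  · rw [List.pairwise_ofFn]
    intro i j hij a ha b hb
    rw [List.eq_of_mem_replicate ha, List.eq_of_mem_replicate hb]
    exact hij.le

theorem sorted_eq_toWord (l : List (Fin n)) (h : l.Pairwise (· ≤ ·)) :
    l = toWord (fun i => l.count i) := by
  refine List.Perm.eq_of_pairwise' h (sorted_toWord _) ?_
  rw [List.perm_iff_count]
  intro a
  rw [count_toWord]

theorem exists_swap_of_not_sorted (l : List (Fin n)) (h : ¬ l.Pairwise (· ≤ ·)) :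
    ∃ (u : List (Fin n)) (i j : Fin n) (v : List (Fin n)), i < j ∧ l = u ++ j :: i :: v := by
  induction l with
  | nil => exact absurd List.Pairwise.nil h
  | cons a rest ih =>
    by_cases hr : rest.Pairwise (· ≤ ·)
    · cases rest with
      | nil => exact absurd (List.pairwise_singleton _ a) h
      | cons b t =>
        by_cases hab : a ≤ b
        · exact absurd (List.pairwise_cons_cons_iff_of_trans.mpr ⟨hab, hr⟩) h
        · exact ⟨[], b, a, t, lt_of_not_ge hab, rfl⟩
    · obtain ⟨u, i, j, v, hij, rfl⟩ := ih hr
      exact ⟨a :: u, i, j, v, hij, rfl⟩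

/-- base-(n+1) value of a word, as termination measure for sorting -/
def μ (l : List (Fin n)) : ℕ := l.foldl (fun acc d => acc * (n+1) + (d.val + 1)) 0

theorem μ_aux (l : List (Fin n)) (a b : ℕ) (hab : a < b) :
    l.foldl (fun acc d => acc * (n+1) + (d.val + 1)) a
      < l.foldl (fun acc d => acc * (n+1) + (d.val + 1)) b := by
  induction l generalizing a b with
  | nil => exact hab
  | cons d t ih =>
    dsimp only [List.foldl_cons]
    apply ih
    have : a * (n+1) < b * (n+1) := by
      apply Nat.mul_lt_mul_of_lt_of_le hab le_rfl; omega
    omega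

theorem μ_swap (u v : List (Fin n)) (i j : Fin n) (hij : i < j) :
    μ (u ++ i :: j :: v) < μ (u ++ j :: i :: v) := by
  unfold μ
  simp only [List.foldl_append, List.foldl_cons]
  apply μ_aux
  set a := List.foldl (fun acc d => acc * (n+1) + (d.val + 1)) 0 u
  have hij' : (i : ℕ) < j := hij
  have hj : (j : ℕ) < n := j.2.trans_le le_rfl |>.trans_le le_rfl
  have hi : (i : ℕ) < n := i.2
  nlinarith [a * (n+1), hij']

section Quot
variable {K : Type*} [Field K] (c : Fin n → Fin n → K) (k0 : Fin n → Fin n → K)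
  (kl : Fin n → Fin n → Fin n → K)

/-- the generators of `A` -/
noncomputable def xg : Fin n → RingQuot (constExtRel K n c k0 kl) :=
  fun i => RingQuot.mkAlgHom K (constExtRel K n c k0 kl) (FreeAlgebra.ι K i)

theorem hrel {i j : Fin n} (hij : i < j) :
    xg c k0 kl j * xg c k0 kl i =
      c i j • (xg c k0 kl i * xg c k0 kl j) -
        algebraMap K (RingQuot (constExtRel K n c k0 kl)) (k0 i j) -
        ∑ t, kl i j t • xg c k0 kl t := by
  have h := RingQuot.mkAlgHom_rel K
    (s := constExtRel K n c k0 kl)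
    (x := FreeAlgebra.ι K j * FreeAlgebra.ι K i)
    (y := c i j • (FreeAlgebra.ι K i * FreeAlgebra.ι K j) -
        algebraMap K (FreeAlgebra K (Fin n)) (k0 i j) - ∑ t, kl i j t • FreeAlgebra.ι K t)
    ⟨i, j, hij, rfl, rfl⟩
  simpa only [map_mul, map_sub, map_sum, map_smul, AlgHom.commutes, xg] using h

theorem word_rel (u v : List (Fin n)) {i j : Fin n} (hij : i < j) :
    wd (xg c k0 kl) (u ++ j :: i :: v) =
      c i j • wd (xg c k0 kl) (u ++ i :: j :: v) -
      k0 i j • wd (xg c k0 kl) (u ++ v) -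
      ∑ t, kl i j t • wd (xg c k0 kl) (u ++ t :: v) := by
  simp only [wd_append, wd_cons]
  rw [← mul_assoc (xg c k0 kl j) (xg c k0 kl i), ← mul_assoc (wd (xg c k0 kl) u),
    hrel c k0 kl hij]
  simp only [mul_sub, sub_mul, Finset.mul_sum, Finset.sum_mul, mul_smul_comm, smul_mul_assoc,
    Algebra.smul_def, mul_assoc, Algebra.commutes]

/-- span of standard monomials of degree at most `m` -/
def Sspan (m : ℕ) : Submodule K (RingQuot (constExtRel K n c k0 kl)) :=
  Submodule.span K {a | ∃ α : Fin n → ℕ, (∑ i, α i) ≤ m ∧ a = monom (xg c k0 kl) α}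

theorem Sspan_mono {m m' : ℕ} (h : m' ≤ m) : Sspan c k0 kl m' ≤ Sspan c k0 kl m :=
  Submodule.span_mono (fun a ⟨α, hα, ha⟩ => ⟨α, hα.trans h, ha⟩)

theorem span_word : ∀ m : ℕ, ∀ l : List (Fin n), l.length ≤ m →
    wd (xg c k0 kl) l ∈ Sspan c k0 kl m := by
  intro m
  induction m using Nat.strong_induction_on with
  | _ m IH =>
  suffices h : ∀ fuel : ℕ, ∀ l : List (Fin n), l.length ≤ m → μ l < fuel →
      wd (xg c k0 kl) l ∈ Sspan c k0 kl m by
    intro l hl; exact h (μ l + 1) l hl (Nat.lt_succ_self _)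
  intro fuel
  induction fuel with
  | zero => intro l _ h; omega
  | succ fuel IHf =>
    intro l hl hμ
    by_cases hsort : l.Pairwise (· ≤ ·)
    · have hl' := sorted_eq_toWord l hsort
      apply Submodule.subset_span
      refine ⟨fun i => l.count i, ?_, ?_⟩
      · rw [← length_toWord, ← hl']; exact hl
      · rw [monom_eq_wd_toWord, ← hl']
    · obtain ⟨u, i, j, v, hij, rfl⟩ := exists_swap_of_not_sorted l hsort
      rw [word_rel c k0 kl u v hij]
      have hl' : u.length + v.length + 2 ≤ m := by
        simp only [List.length_append, List.length_cons] at hl; omega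
      refine Submodule.sub_mem _ (Submodule.sub_mem _ ?_ ?_) ?_
      · refine Submodule.smul_mem _ _ (IHf (u ++ i :: j :: v) ?_ ?_)
        · simp only [List.length_append, List.length_cons]; omega
        · exact lt_of_lt_of_le (μ_swap u v i j hij) (Nat.lt_succ_iff.mp hμ)
      · refine Submodule.smul_mem _ _ (Sspan_mono c k0 kl (m' := (u ++ v).length) ?_
          (IH _ ?_ _ le_rfl))
        · simp only [List.length_append]; omega
        · simp only [List.length_append]; omega
      · refine Submodule.sum_mem _ (fun t _ => Submodule.smul_mem _ _ ?_)
        refine Sspan_mono c k0 kl (m' := (u ++ t :: v).length) ?_ (IH _ ?_ _ le_rfl)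
        · simp only [List.length_append, List.length_cons]; omega
        · simp only [List.length_append, List.length_cons]; omega

theorem F_le_Sspan (m : ℕ) :
    ∀ a ∈ quotDegFiltration K n (constExtRel K n c k0 kl) m, a ∈ Sspan c k0 kl m := by
  intro a ha
  refine AddSubgroup.closure_induction ?_ ?_ ?_ ?_ ha
  · rintro b ⟨k, l, hlen, rfl⟩
    exact Submodule.smul_mem _ _ (span_word c k0 kl m l hlen)
  · exact Submodule.zero_mem _
  · intro b₁ b₂ _ _ h₁ h₂; exact Submodule.add_mem _ h₁ h₂
  · intro b _ h; exact Submodule.neg_mem _ h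

/-- everything is in the span of all standard monomials -/
theorem mem_span_monom_top (y : RingQuot (constExtRel K n c k0 kl)) :
    y ∈ Submodule.span K (Set.range (monom (xg c k0 kl))) := by
  have hS : ∀ m, Sspan c k0 kl m ≤ Submodule.span K (Set.range (monom (xg c k0 kl))) :=
    fun m => Submodule.span_mono (fun a ⟨α, _, ha⟩ => ⟨α, ha.symm⟩)
  obtain ⟨x, rfl⟩ := RingQuot.mkAlgHom_surjective K (constExtRel K n c k0 kl) y
  induction x using FreeAlgebra.induction with
  | grade0 r =>
    rw [AlgHom.commutes, Algebra.algebraMap_eq_smul_one]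
    refine Submodule.smul_mem _ _ (Submodule.subset_span ⟨0, ?_⟩)
    simp [monom]
  | grade1 i =>
    refine hS 1 ?_
    have := span_word c k0 kl 1 [i] (by simp)
    simpa [wd, xg] using this
  | mul a b ha hb =>
    rw [map_mul]
    -- span * span ⊆ span
    refine Submodule.span_induction ?_ ?_ ?_ ?_ ha
    · rintro p ⟨α, rfl⟩
      refine Submodule.span_induction ?_ ?_ ?_ ?_ hb
      · rintro q ⟨β, rfl⟩
        rw [monom_eq_wd_toWord, monom_eq_wd_toWord, ← wd_append]
        exact hS _ (span_word c k0 kl _ _ le_rfl)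
      · simp
      · intro q₁ q₂ _ _ h₁ h₂; rw [mul_add]; exact Submodule.add_mem _ h₁ h₂
      · intro k q _ h; rw [mul_smul_comm]; exact Submodule.smul_mem _ _ h
    · simp
    · intro p₁ p₂ _ _ h₁ h₂; rw [add_mul]; exact Submodule.add_mem _ h₁ h₂
    · intro k p _ h; rw [smul_mul_assoc]; exact Submodule.smul_mem _ _ h
  | add a b ha hb =>
    rw [map_add]; exact Submodule.add_mem _ ha hb

end Quot

section GrLemmas
variable {A : Type*} [Ring A] {F : ℕ → AddSubgroup A}
  {hmul : ∀ {i j : ℕ} {a b : A}, a ∈ F i → b ∈ F j → a * b ∈ F (i + j)}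
  {hone : (1 : A) ∈ F 0} {G : Type*} [Ring G]
  (M : GrModel F hmul hone G)

theorem psi_congr {i j : ℕ} (h : i = j) (a b : A) (hab : a = b) (hi : a ∈ F i)
    (hj : b ∈ F j) : M.ψ i ⟨a, hi⟩ = M.ψ j ⟨b, hj⟩ := by subst h; subst hab; rfl

end GrLemmas

section GrLemmas2
variable {K : Type*} [Field K] {A : Type*} [Ring A] [Algebra K A] {F : ℕ → AddSubgroup A}
  {hmul : ∀ {i j : ℕ} {a b : A}, a ∈ F i → b ∈ F j → a * b ∈ F (i + j)}
  {hone : (1 : A) ∈ F 0} {G : Type*} [Ring G] [Algebra K G]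
  (M : GrModel F hmul hone G)
  (halg : ∀ (k : K) (h : algebraMap K A k ∈ F 0),
      M.ψ 0 ⟨algebraMap K A k, h⟩ = algebraMap K G k)
  (halgF : ∀ k : K, algebraMap K A k ∈ F 0)

include halg halgF in
theorem psi_smul (m : ℕ) (k : K) (a : A) (h : a ∈ F m) (h' : k • a ∈ F m) :
    M.ψ m ⟨k • a, h'⟩ = k • M.ψ m ⟨a, h⟩ := by
  have e : k • a = a * algebraMap K A k := by rw [Algebra.smul_def, Algebra.commutes]
  have hM : algebraMap K A k ∈ F 0 := halgF k
  calc M.ψ m ⟨k • a, h'⟩ = M.ψ m ⟨a, h⟩ * M.ψ 0 ⟨algebraMap K A k, hM⟩ := by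
        rw [psi_congr M (Nat.add_zero m).symm _ _ e h' (hmul h hM)]
        exact M.mul_symbol m 0 ⟨a, h⟩ ⟨_, hM⟩
    _ = k • M.ψ m ⟨a, h⟩ := by
        rw [halg, ← Algebra.commutes, ← Algebra.smul_def]

variable (x : Fin n → A) (hx1 : ∀ i, x i ∈ F 1) (hxw : ∀ l : List (Fin n), wd x l ∈ F l.length)

include hx1 hxw in
theorem psi_word (l : List (Fin n)) (h : wd x l ∈ F l.length) :
    M.ψ l.length ⟨wd x l, h⟩ = (l.map fun i => M.ψ 1 ⟨x i, hx1 i⟩).prod := by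
  induction l using List.reverseRecOn with
  | nil => exact M.one_symbol
  | append_singleton l i IH =>
    have hw : wd x l ∈ F l.length := hxw l
    have hxi : x i ∈ F 1 := hx1 i
    have h2 := M.mul_symbol l.length 1 ⟨wd x l, hw⟩ ⟨x i, hxi⟩
    calc M.ψ (l ++ [i]).length ⟨wd x (l ++ [i]), h⟩
        = M.ψ (l.length + 1) ⟨wd x l * x i, hmul hw hxi⟩ := by
          refine psi_congr M (by simp) _ _ ?_ _ _
          simp [wd]
      _ = M.ψ l.length ⟨wd x l, hw⟩ * M.ψ 1 ⟨x i, hxi⟩ := h2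
      _ = ((l ++ [i]).map fun t => M.ψ 1 ⟨x t, hx1 t⟩).prod := by
          rw [IH hw]; simp

end GrLemmas2

section Main
variable {K : Type*} [Field K] {n : ℕ} (c : Fin n → Fin n → K) (k0 : Fin n → Fin n → K)
  (kl : Fin n → Fin n → Fin n → K)

theorem F_mono {m m' : ℕ} (h : m' ≤ m) :
    quotDegFiltration K n (constExtRel K n c k0 kl) m' ≤
      quotDegFiltration K n (constExtRel K n c k0 kl) m :=
  AddSubgroup.closure_mono (fun a ⟨k, l, hl, ha⟩ => ⟨k, l, hl.trans h, ha⟩)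

theorem mem_F_smul_word (k : K) (l : List (Fin n)) {m : ℕ} (hl : l.length ≤ m) :
    k • wd (xg c k0 kl) l ∈ quotDegFiltration K n (constExtRel K n c k0 kl) m :=
  AddSubgroup.subset_closure ⟨k, l, hl, rfl⟩

theorem mem_F_word (l : List (Fin n)) {m : ℕ} (hl : l.length ≤ m) :
    wd (xg c k0 kl) l ∈ quotDegFiltration K n (constExtRel K n c k0 kl) m := by
  have := mem_F_smul_word c k0 kl (1 : K) l hl
  rwa [one_smul] at this

theorem mem_F_x (i : Fin n) :
    xg c k0 kl i ∈ quotDegFiltration K n (constExtRel K n c k0 kl) 1 := by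
  have h := mem_F_word c k0 kl [i] (le_refl 1)
  have e : wd (xg c k0 kl) [i] = xg c k0 kl i := by simp [wd]
  rwa [e] at h

theorem mem_F_algebraMap (k : K) :
    algebraMap K (RingQuot (constExtRel K n c k0 kl)) k ∈
      quotDegFiltration K n (constExtRel K n c k0 kl) 0 := by
  have h := mem_F_smul_word c k0 kl k [] (le_refl 0)
  rwa [wd_nil, ← Algebra.algebraMap_eq_smul_one] at h

theorem mem_F_monom (α : Fin n → ℕ) :
    monom (xg c k0 kl) α ∈ quotDegFiltration K n (constExtRel K n c k0 kl) (∑ i, α i) := by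
  rw [monom_eq_wd_toWord]
  exact mem_F_word c k0 kl _ (le_of_eq (length_toWord α))

variable
  (hmul : ∀ {i j : ℕ} {a b : RingQuot (constExtRel K n c k0 kl)},
      a ∈ quotDegFiltration K n (constExtRel K n c k0 kl) i →
      b ∈ quotDegFiltration K n (constExtRel K n c k0 kl) j →
      a * b ∈ quotDegFiltration K n (constExtRel K n c k0 kl) (i + j))
  (hone : (1 : RingQuot (constExtRel K n c k0 kl)) ∈
      quotDegFiltration K n (constExtRel K n c k0 kl) 0)
  {G : Type*} [Ring G] [Algebra K G]
  (M : GrModel (quotDegFiltration K n (constExtRel K n c k0 kl)) hmul hone G)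
  (halg : ∀ (k : K) (h : algebraMap K (RingQuot (constExtRel K n c k0 kl)) k ∈
      quotDegFiltration K n (constExtRel K n c k0 kl) 0),
      M.ψ 0 ⟨algebraMap K (RingQuot (constExtRel K n c k0 kl)) k, h⟩ = algebraMap K G k)

/-- the degree-one symbols in `G` -/
noncomputable def symb : Fin n → G :=
  fun i => M.ψ 1 ⟨xg c k0 kl i, mem_F_x c k0 kl i⟩

include halg in
theorem symb_rel {i j : Fin n} (hij : i < j) :
    symb c k0 kl hmul hone M j * symb c k0 kl hmul hone M i =
      c i j • (symb c k0 kl hmul hone M i * symb c k0 kl hmul hone M j) := by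
  set A' := RingQuot (constExtRel K n c k0 kl)
  have e1 : xg c k0 kl j * xg c k0 kl i = wd (xg c k0 kl) [j, i] := by simp [wd, mul_assoc]
  have e2 : xg c k0 kl i * xg c k0 kl j = wd (xg c k0 kl) [i, j] := by simp [wd, mul_assoc]
  have hp : xg c k0 kl j * xg c k0 kl i ∈
      quotDegFiltration K n (constExtRel K n c k0 kl) 2 := by
    rw [e1]; exact mem_F_word c k0 kl _ (by simp)
  have hq : c i j • (xg c k0 kl i * xg c k0 kl j) ∈
      quotDegFiltration K n (constExtRel K n c k0 kl) 2 := by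
    rw [e2]; exact mem_F_smul_word c k0 kl _ _ (by simp)
  have hlow : xg c k0 kl j * xg c k0 kl i - c i j • (xg c k0 kl i * xg c k0 kl j) ∈
      quotDegFiltration K n (constExtRel K n c k0 kl) 1 := by
    have e : xg c k0 kl j * xg c k0 kl i - c i j • (xg c k0 kl i * xg c k0 kl j) =
        -(algebraMap K A' (k0 i j)) - ∑ t, kl i j t • xg c k0 kl t := by
      rw [hrel c k0 kl hij]; abel
    rw [e]
    refine AddSubgroup.sub_mem _ (AddSubgroup.neg_mem _ ?_) (AddSubgroup.sum_mem _ ?_)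
    · exact F_mono c k0 kl (by norm_num) (mem_F_algebraMap c k0 kl _)
    · intro t _
      have e3 : kl i j t • xg c k0 kl t = kl i j t • wd (xg c k0 kl) [t] := by simp [wd]
      rw [e3]; exact mem_F_smul_word c k0 kl _ _ (by simp)
  have h0 : M.ψ 2 ⟨xg c k0 kl j * xg c k0 kl i - c i j • (xg c k0 kl i * xg c k0 kl j),
      AddSubgroup.sub_mem _ hp hq⟩ = 0 := (M.ker_succ 1 _).mpr hlow
  have hsplit : (⟨xg c k0 kl j * xg c k0 kl i - c i j • (xg c k0 kl i * xg c k0 kl j),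
      AddSubgroup.sub_mem _ hp hq⟩ :
        quotDegFiltration K n (constExtRel K n c k0 kl) 2) =
      ⟨xg c k0 kl j * xg c k0 kl i, hp⟩ - ⟨c i j • (xg c k0 kl i * xg c k0 kl j), hq⟩ :=
    Subtype.ext (by simp)
  rw [hsplit, map_sub, sub_eq_zero] at h0
  have hmulj : M.ψ 2 ⟨xg c k0 kl j * xg c k0 kl i, hp⟩ =
      symb c k0 kl hmul hone M j * symb c k0 kl hmul hone M i :=
    M.mul_symbol 1 1 ⟨xg c k0 kl j, mem_F_x c k0 kl j⟩ ⟨xg c k0 kl i, mem_F_x c k0 kl i⟩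
  have hpq : xg c k0 kl i * xg c k0 kl j ∈
      quotDegFiltration K n (constExtRel K n c k0 kl) 2 := by
    rw [e2]; exact mem_F_word c k0 kl _ (by simp)
  have hmuli : M.ψ 2 ⟨c i j • (xg c k0 kl i * xg c k0 kl j), hq⟩ =
      c i j • (symb c k0 kl hmul hone M i * symb c k0 kl hmul hone M j) := by
    rw [psi_smul M halg (mem_F_algebraMap c k0 kl) 2 (c i j) _ hpq hq]
    congr 1
    exact M.mul_symbol 1 1 ⟨xg c k0 kl i, mem_F_x c k0 kl i⟩ ⟨xg c k0 kl j, mem_F_x c k0 kl j⟩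
  rw [hmulj, hmuli] at h0
  exact h0

/-- the homomorphism `B → G` -/
noncomputable def fB : RingQuot (homogRel K n c) →ₐ[K] G :=
  RingQuot.liftAlgHom K ⟨FreeAlgebra.lift K (symb c k0 kl hmul hone M), by
    rintro u v ⟨i, j, hij, rfl, rfl⟩
    simp only [map_mul, map_smul, FreeAlgebra.lift_ι_apply]
    exact symb_rel c k0 kl hmul hone M halg hij⟩

theorem fB_gen (i : Fin n) :
    fB c k0 kl hmul hone M halg (RingQuot.mkAlgHom K (homogRel K n c) (FreeAlgebra.ι K i)) =
      symb c k0 kl hmul hone M i := by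
  rw [fB, RingQuot.liftAlgHom_mkAlgHom_apply, FreeAlgebra.lift_ι_apply]

theorem fB_wd (l : List (Fin n)) :
    fB c k0 kl hmul hone M halg
        (wd (fun i => RingQuot.mkAlgHom K (homogRel K n c) (FreeAlgebra.ι K i)) l) =
      (l.map (symb c k0 kl hmul hone M)).prod := by
  rw [wd, map_list_prod, List.map_map]
  have e : (⇑(fB c k0 kl hmul hone M halg) ∘ fun i =>
      RingQuot.mkAlgHom K (homogRel K n c) (FreeAlgebra.ι K i)) = symb c k0 kl hmul hone M := by
    funext i
    exact fB_gen c k0 kl hmul hone M halg i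
  rw [e]

include halg in
theorem psi_mem_range (m : ℕ) (a : RingQuot (constExtRel K n c k0 kl))
    (ha : a ∈ quotDegFiltration K n (constExtRel K n c k0 kl) m) :
    ∀ h, M.ψ m ⟨a, h⟩ ∈ (fB c k0 kl hmul hone M halg).range := by
  refine AddSubgroup.closure_induction ?_ ?_ ?_ ?_ ha
  · rintro b ⟨k, l, hl, rfl⟩ h
    have hwd : wd (xg c k0 kl) l ∈ quotDegFiltration K n (constExtRel K n c k0 kl) m :=
      mem_F_word c k0 kl l hl
    have hb : (k • (l.map fun i => RingQuot.mkAlgHom K (constExtRel K n c k0 kl)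
        (FreeAlgebra.ι K i)).prod) = k • wd (xg c k0 kl) l := rfl
    have h2 : M.ψ m ⟨_, h⟩ = k • M.ψ m ⟨wd (xg c k0 kl) l, hwd⟩ :=
      psi_smul M halg (mem_F_algebraMap c k0 kl) m k _ hwd h
    rw [h2]
    rcases eq_or_lt_of_le hl with heq | hlt
    · have h3 : M.ψ m ⟨wd (xg c k0 kl) l, hwd⟩ =
          (l.map (symb c k0 kl hmul hone M)).prod := by
        rw [psi_congr M heq.symm _ _ rfl hwd (mem_F_word c k0 kl l le_rfl)]
        exact psi_word M (xg c k0 kl) (mem_F_x c k0 kl)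
          (fun l' => mem_F_word c k0 kl l' le_rfl) l _
      rw [h3, ← fB_wd c k0 kl hmul hone M halg l]
      exact Subalgebra.smul_mem _ (AlgHom.mem_range_self _ _) k
    · obtain ⟨m', rfl⟩ : ∃ m', m = m' + 1 := ⟨m - 1, by omega⟩
      have h4 : M.ψ (m' + 1) ⟨wd (xg c k0 kl) l, hwd⟩ = 0 :=
        (M.ker_succ m' _).mpr (mem_F_word c k0 kl l (by omega))
      rw [h4, smul_zero]
      exact Subalgebra.zero_mem _
  · intro h
    have : (⟨(0 : RingQuot (constExtRel K n c k0 kl)), h⟩ :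
        quotDegFiltration K n (constExtRel K n c k0 kl) m) = 0 := rfl
    rw [this, map_zero]; exact Subalgebra.zero_mem _
  · intro b₁ b₂ h₁ h₂ ih₁ ih₂ h
    have : (⟨b₁ + b₂, h⟩ : quotDegFiltration K n (constExtRel K n c k0 kl) m) =
        ⟨b₁, h₁⟩ + ⟨b₂, h₂⟩ := rfl
    rw [this, map_add]
    exact Subalgebra.add_mem _ (ih₁ h₁) (ih₂ h₂)
  · intro b hb ih h
    have : (⟨-b, h⟩ : quotDegFiltration K n (constExtRel K n c k0 kl) m) = -⟨b, hb⟩ := rfl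
    rw [this, map_neg]
    exact Subalgebra.neg_mem _ (ih hb)

include halg in
theorem fB_surjective : Function.Surjective (fB c k0 kl hmul hone M halg) := by
  intro g
  obtain ⟨N, a, rfl⟩ := M.decomp g
  have : ∑ m ∈ Finset.range N, M.ψ m (a m) ∈ (fB c k0 kl hmul hone M halg).range := by
    refine Subalgebra.sum_mem _ (fun m _ => ?_)
    exact psi_mem_range c k0 kl hmul hone M halg m (a m) (a m).2 (a m).2
  exact this

theorem homog_eq : homogRel K n c = constExtRel K n c (fun _ _ => 0) (fun _ _ _ => 0) := by
  funext u v
  apply propext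
  constructor
  · rintro ⟨i, j, hij, hu, hv⟩
    exact ⟨i, j, hij, hu, by simp [hv]⟩
  · rintro ⟨i, j, hij, hu, hv⟩
    exact ⟨i, j, hij, hu, by simpa using hv⟩

theorem mem_span_monom_topB (y : RingQuot (homogRel K n c)) :
    y ∈ Submodule.span K (Set.range
      (monom (fun i => RingQuot.mkAlgHom K (homogRel K n c) (FreeAlgebra.ι K i)))) := by
  revert y
  rw [homog_eq c]
  exact mem_span_monom_top c (fun _ _ => 0) (fun _ _ _ => 0)

theorem map_monom {R S : Type*} [Monoid R] [Monoid S] {FF : Type*} [FunLike FF R S]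
    [MonoidHomClass FF R S] (f : FF) (x : Fin n → R) (α : Fin n → ℕ) :
    f (monom x α) = monom (fun i => f (x i)) α := by
  simp [monom, map_list_prod, List.map_ofFn, Function.comp_def, map_pow]

theorem fB_monom (α : Fin n → ℕ) :
    fB c k0 kl hmul hone M halg
        (monom (fun i => RingQuot.mkAlgHom K (homogRel K n c) (FreeAlgebra.ι K i)) α) =
      M.ψ (∑ i, α i) ⟨monom (xg c k0 kl) α, mem_F_monom c k0 kl α⟩ := by
  rw [map_monom]
  have e : (fun i => fB c k0 kl hmul hone M halg
      (RingQuot.mkAlgHom K (homogRel K n c) (FreeAlgebra.ι K i))) =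
      symb c k0 kl hmul hone M := funext (fB_gen c k0 kl hmul hone M halg)
  rw [e, monom_eq_wd_toWord]
  have e2 : wd (symb c k0 kl hmul hone M) (toWord α) =
      ((toWord α).map fun i => M.ψ 1 ⟨xg c k0 kl i, mem_F_x c k0 kl i⟩).prod := rfl
  rw [e2, ← psi_word M (xg c k0 kl) (mem_F_x c k0 kl)
      (fun l => mem_F_word c k0 kl l le_rfl) (toWord α) (mem_F_word c k0 kl _ le_rfl)]
  exact psi_congr M (length_toWord α) _ _ (monom_eq_wd_toWord _ _).symm _ _

include halg in
theorem fB_injective (b : Module.Basis (Fin n → ℕ) K (RingQuot (constExtRel K n c k0 kl)))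
    (hb : ∀ α, b α = monom (xg c k0 kl) α) :
    Function.Injective (fB c k0 kl hmul hone M halg) := by
  rw [injective_iff_map_eq_zero]
  intro u hu
  obtain ⟨κ, hκ⟩ := Finsupp.mem_span_range_iff_exists_finsupp.mp (mem_span_monom_topB c u)
  classical
  set deg : (Fin n → ℕ) → ℕ := fun α => ∑ i, α i with hdeg
  set N := (κ.support.sup deg) + 1 with hN
  set Ψ : (Fin n → ℕ) → G := fun α =>
    M.ψ (deg α) ⟨monom (xg c k0 kl) α, mem_F_monom c k0 kl α⟩ with hΨ
  have hmem1 : ∀ (m : ℕ) (α : Fin n → ℕ), α ∈ κ.support.filter (fun α => deg α = m) →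
      κ α • monom (xg c k0 kl) α ∈ quotDegFiltration K n (constExtRel K n c k0 kl) m := by
    intro m α hα
    have hdα : deg α = m := (Finset.mem_filter.mp hα).2
    rw [monom_eq_wd_toWord]
    exact mem_F_smul_word c k0 kl _ _ (by rw [length_toWord]; exact le_of_eq hdα)
  have hmem : ∀ m : ℕ, (∑ α ∈ κ.support.filter fun α => deg α = m,
      κ α • monom (xg c k0 kl) α) ∈ quotDegFiltration K n (constExtRel K n c k0 kl) m :=
    fun m => AddSubgroup.sum_mem _ (hmem1 m)
  set aa : ∀ m, quotDegFiltration K n (constExtRel K n c k0 kl) m :=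
    fun m => ⟨_, hmem m⟩ with haa
  have hpsi : ∀ m, M.ψ m (aa m) =
      ∑ α ∈ κ.support.filter fun α => deg α = m, κ α • Ψ α := by
    intro m
    have hval : aa m = ∑ α ∈ (κ.support.filter fun α => deg α = m).attach,
        (⟨κ α.1 • monom (xg c k0 kl) α.1, hmem1 m α.1 α.2⟩ :
          quotDegFiltration K n (constExtRel K n c k0 kl) m) := by
      refine Subtype.ext ?_
      rw [AddSubmonoidClass.coe_finset_sum]
      exact (Finset.sum_attach _ (fun α => κ α • monom (xg c k0 kl) α)).symm
    rw [hval, map_sum, ← Finset.sum_attach (κ.support.filter fun α => deg α = m)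
      (fun α => κ α • Ψ α)]
    refine Finset.sum_congr rfl (fun α _ => ?_)
    have hdα : deg α.1 = m := (Finset.mem_filter.mp α.2).2
    rw [psi_smul M halg (mem_F_algebraMap c k0 kl) m (κ α.1) _
      (F_mono c k0 kl (le_of_eq hdα) (mem_F_monom c k0 kl α.1)) _]
    congr 1
    exact (psi_congr M hdα _ _ rfl _ _).symm
  have htotal : ∑ m ∈ Finset.range N, M.ψ m (aa m) = 0 := by
    have h1 : ∑ m ∈ Finset.range N, M.ψ m (aa m) = ∑ α ∈ κ.support, κ α • Ψ α := by
      simp only [hpsi]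
      exact Finset.sum_fiberwise_of_maps_to
        (fun α hα => Finset.mem_range.mpr (Nat.lt_succ_of_le (Finset.le_sup hα))) _
    have h2 : fB c k0 kl hmul hone M halg u = ∑ α ∈ κ.support, κ α • Ψ α := by
      rw [← hκ, Finsupp.sum, map_sum]
      refine Finset.sum_congr rfl (fun α _ => ?_)
      rw [map_smul, fB_monom c k0 kl hmul hone M halg α]
    rw [h1, ← h2, hu]
  have hzero := M.indep N aa htotal
  have hκ0 : ∀ α₀ ∈ κ.support, κ α₀ = 0 := by
    intro α₀ hα₀
    have hmN : deg α₀ < N := Nat.lt_succ_of_le (Finset.le_sup hα₀)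
    have h0 : M.ψ (deg α₀) (aa (deg α₀)) = 0 := hzero (deg α₀) hmN
    have hspan : ((aa (deg α₀) : RingQuot (constExtRel K n c k0 kl))) ∈
        Submodule.span K (⇑b '' {β | deg β < deg α₀}) := by
      rcases hm : deg α₀ with _ | m'
      · rw [hm] at h0
        have hz := (M.ker_zero (aa 0)).mp h0
        rw [hz]
        exact Submodule.zero_mem _
      · rw [hm] at h0
        have hFm : ((aa (m' + 1) : RingQuot (constExtRel K n c k0 kl))) ∈
            quotDegFiltration K n (constExtRel K n c k0 kl) m' :=
          (M.ker_succ m' (aa (m' + 1))).mp h0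
        have h5 := F_le_Sspan c k0 kl m' _ hFm
        refine Submodule.span_mono ?_ h5
        rintro a ⟨α, hα, ha⟩
        exact ⟨α, Nat.lt_succ_of_le hα, ((hb α).trans ha.symm)⟩
    have hsupp := (Module.Basis.mem_span_image b).mp hspan
    have hval : ((aa (deg α₀) : RingQuot (constExtRel K n c k0 kl))) =
        ∑ β ∈ κ.support.filter (fun β => deg β = deg α₀), κ β • b β := by
      simp only [hb]
      rfl
    have hrepr : b.repr ((aa (deg α₀) : RingQuot (constExtRel K n c k0 kl))) α₀ = κ α₀ := by
      rw [hval, map_sum, Finsupp.finset_sum_apply]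
      have hterm : ∀ β ∈ κ.support.filter (fun β => deg β = deg α₀),
          (b.repr (κ β • b β)) α₀ = if β = α₀ then κ β else 0 := by
        intro β _
        rw [map_smul, Module.Basis.repr_self, Finsupp.smul_apply, Finsupp.single_apply]
        split <;> simp
      rw [Finset.sum_congr rfl hterm, Finset.sum_ite_eq' _ α₀]
      simp [hα₀]
    have hnot : α₀ ∉ (b.repr ((aa (deg α₀) : RingQuot (constExtRel K n c k0 kl)))).support := by
      intro hc
      exact absurd (hsupp hc) (by simp)
    rw [Finsupp.notMem_support_iff, hrepr] at hnot
    exact hnot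
  have hκz : κ = 0 := by
    ext α
    by_cases h : α ∈ κ.support
    · exact hκ0 α h
    · exact Finsupp.notMem_support_iff.mp h
  rw [hκz, Finsupp.sum_zero_index] at hκ
  exact hκ.symm

end Main

end PBWAux

/-- **Proposition 4.5.**  Let `A = K⟨x₁,…,xₙ⟩/⟨P⟩` be a constant skew PBW extension of a
field `K`, with `P` spanned by the elements `xⱼxᵢ − c_{ij} xᵢxⱼ + r₀ + r₁x₁ + ⋯ + rₙxₙ`
(`c_{ij} ≠ 0`), and let `B = K⟨x₁,…,xₙ⟩/⟨xⱼxᵢ − c_{ij} xᵢxⱼ⟩` be its homogeneous version.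
Then `A` is a PBW deformation of `B`: the natural graded map `p : B → Gr(A)` (sending each
generator `xᵢ` to the degree-one symbol of `xᵢ`) is an isomorphism. -/
theorem constant_skewPBW_is_PBW_deformation (K : Type*) [Field K] (n : ℕ)
    (c : Fin n → Fin n → K) (k0 : Fin n → Fin n → K) (kl : Fin n → Fin n → Fin n → K)
    (hc : ∀ i j : Fin n, i < j → c i j ≠ 0)
    -- `A` is a skew PBW extension: the standard monomials form a `K`-basis of `A`
    (hbasisA : ∃ b : Module.Basis (Fin n → ℕ) K (RingQuot (constExtRel K n c k0 kl)),
      ∀ α : Fin n → ℕ, b α = monom (fun i => RingQuot.mkAlgHom K (constExtRel K n c k0 kl)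
        (FreeAlgebra.ι K i)) α)
    (hmul : ∀ {i j : ℕ} {a b : RingQuot (constExtRel K n c k0 kl)},
      a ∈ quotDegFiltration K n (constExtRel K n c k0 kl) i →
      b ∈ quotDegFiltration K n (constExtRel K n c k0 kl) j →
      a * b ∈ quotDegFiltration K n (constExtRel K n c k0 kl) (i + j))
    (hone : (1 : RingQuot (constExtRel K n c k0 kl)) ∈
      quotDegFiltration K n (constExtRel K n c k0 kl) 0)
    -- `G` is (a model of) the associated graded algebra `Gr(A)`
    (G : Type*) [Ring G] [Algebra K G]
    (M : GrModel (quotDegFiltration K n (constExtRel K n c k0 kl)) hmul hone G)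
    (halg : ∀ (k : K) (h : algebraMap K (RingQuot (constExtRel K n c k0 kl)) k ∈
        quotDegFiltration K n (constExtRel K n c k0 kl) 0),
      M.ψ 0 ⟨algebraMap K (RingQuot (constExtRel K n c k0 kl)) k, h⟩ = algebraMap K G k) :
    ∃ f : RingQuot (homogRel K n c) ≃ₐ[K] G,
      ∀ (i : Fin n) (h : RingQuot.mkAlgHom K (constExtRel K n c k0 kl) (FreeAlgebra.ι K i) ∈
          quotDegFiltration K n (constExtRel K n c k0 kl) 1),
        f (RingQuot.mkAlgHom K (homogRel K n c) (FreeAlgebra.ι K i)) =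
          M.ψ 1 ⟨RingQuot.mkAlgHom K (constExtRel K n c k0 kl) (FreeAlgebra.ι K i), h⟩ := by
  obtain ⟨b, hb⟩ := hbasisA
  refine ⟨AlgEquiv.ofBijective (PBWAux.fB c k0 kl hmul hone M halg)
    ⟨PBWAux.fB_injective c k0 kl hmul hone M halg b hb,
     PBWAux.fB_surjective c k0 kl hmul hone M halg⟩, ?_⟩
  intro i h
  exact PBWAux.fB_gen c k0 kl hmul hone M halg i
end

section
/- Let g be a Lie algebra over a field K and f : g × g → K a 2-cocycle, i.e., f is bilinear, f(x,x) = 0, and f(x,[y,z]) + f(z,[x,y]) + f(y,[z,x]) = 0 for all x,y,z ∈ g. If g is finite-dimensional with basis x_1,…,x_n, then the Sridharan enveloping algebra U_f(g) = T(g)/⟨x⊗y − y⊗x − [x,y] − f(x,y) : x,y ∈ g⟩ has the standard monomials x_1^{α_1}⋯x_n^{α_n} (α ∈ ℕ^n) as a K-vector space basis. -/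
/-- The defining relations `x⊗y − y⊗x = [x,y] + f(x,y)` of the Sridharan enveloping algebra
`U_f(g)`, as a relation on the tensor algebra `T(g)`. -/
def sridharanRel (K : Type*) [Field K] (g : Type*) [LieRing g] [LieAlgebra K g]
    (f : g →ₗ[K] g →ₗ[K] K) : TensorAlgebra K g → TensorAlgebra K g → Prop :=
  fun u v => ∃ x y : g, u = TensorAlgebra.ι K x * TensorAlgebra.ι K y ∧
    v = TensorAlgebra.ι K y * TensorAlgebra.ι K x + TensorAlgebra.ι K ⁅x, y⁆ +
        algebraMap K (TensorAlgebra K g) (f x y)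

namespace SridharanAux

variable {K : Type*} [Field K] {n : ℕ}

/-- basis vector of the monomial space -/
noncomputable def E (K : Type*) [Field K] {n : ℕ} (α : Fin n → ℕ) : ((Fin n → ℕ) →₀ K) :=
  Finsupp.single α 1

def deg {n : ℕ} (α : Fin n → ℕ) : ℕ := ∑ j, α j

lemma deg_add_single (α : Fin n → ℕ) (i : Fin n) :
    deg (α + Pi.single i 1) = deg α + 1 := by
  simp [deg, Finset.sum_add_distrib]

lemma exists_split {α : Fin n → ℕ} {j : Fin n} (h : α j ≠ 0) :
    α = (α - Pi.single j 1) + Pi.single j 1 := by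
  funext k
  by_cases hk : k = j
  · subst hk; simp; omega
  · simp [Pi.single_apply, hk]

/-- least index with nonzero exponent, fallback `i`. -/
noncomputable def lead (α : Fin n → ℕ) (i : Fin n) : Fin n :=
  if h : (Finset.univ.filter fun j => α j ≠ 0).Nonempty then Finset.min' _ h else i

lemma lead_ne {α : Fin n → ℕ} {j : Fin n} (hj : α j ≠ 0) (i : Fin n) :
    α (lead α i) ≠ 0 := by
  have hne : (Finset.univ.filter fun j => α j ≠ 0).Nonempty := ⟨j, by simp [hj]⟩
  have := Finset.min'_mem _ hne
  simp only [Finset.mem_filter] at this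
  simpa [lead, hne] using this.2

lemma lead_le {α : Fin n → ℕ} {j : Fin n} (hj : α j ≠ 0) (i : Fin n) :
    lead α i ≤ j := by
  have hne : (Finset.univ.filter fun j => α j ≠ 0).Nonempty := ⟨j, by simp [hj]⟩
  simpa [lead, hne] using Finset.min'_le _ j (by simp [hj])

lemma lead_min {α : Fin n → ℕ} (i : Fin n) {k : Fin n} (hk : k < lead α i) : α k = 0 := by
  by_contra hne
  exact absurd (lead_le hne i) (not_le.mpr hk)

lemma lead_lt {α : Fin n → ℕ} {i : Fin n} (h : ¬ ∀ j, j < i → α j = 0) :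
    lead α i < i := by
  push_neg at h
  obtain ⟨j, hji, hj⟩ := h
  exact lt_of_le_of_lt (lead_le hj i) hji

lemma lead_eq {α : Fin n → ℕ} {j : Fin n} (h1 : α j ≠ 0) (h2 : ∀ k, k < j → α k = 0)
    (i : Fin n) : lead α i = j := by
  refine le_antisymm (lead_le h1 i) ?_
  by_contra hlt
  exact absurd (h2 _ (not_le.mp hlt)) (lead_ne h1 i)

/-- lexicographic strong induction on `ℕ × ℕ`. -/
lemma lexInd {C : ℕ → ℕ → Prop}
    (h : ∀ d m, (∀ d' m', d' < d → C d' m') → (∀ m', m' < m → C d m') → C d m) :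
    ∀ d m, C d m := by
  intro d
  induction d using Nat.strong_induction_on with
  | _ d ihd =>
    intro m
    induction m using Nat.strong_induction_on with
    | _ m ihm => exact h d m (fun d' m' hd => ihd d' hd m') ihm

end SridharanAux

namespace SridharanAux

variable {K : Type*} [Field K] {g : Type*} [LieRing g] [LieAlgebra K g]
variable {n : ℕ}

noncomputable def act (bs : Module.Basis (Fin n) K g) (f : g →ₗ[K] g →ₗ[K] K) :
    ℕ → Fin n → (Fin n → ℕ) → ((Fin n → ℕ) →₀ K)
  | 0, _, _ => 0
  | (d+1), i, α =>
    if h : ∀ j, j < i → α j = 0 then E K (α + Pi.single i 1)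
    else
      let j := lead α i
      let β := α - Pi.single j 1
      (act bs f d i β).sum (fun γ c => c • act bs f (d+1) j γ)
        + (bs.repr ⁅bs i, bs j⁆).sum (fun k r => r • act bs f d k β)
        + f (bs i) (bs j) • E K β
  termination_by d i => (d, i.1)
  decreasing_by
  · exact Prod.Lex.left _ _ (Nat.lt_succ_self d)
  · exact Prod.Lex.right _ (lead_lt h)
  · exact Prod.Lex.left _ _ (Nat.lt_succ_self d)

variable (bs : Module.Basis (Fin n) K g) (f : g →ₗ[K] g →ₗ[K] K)

lemma act_allowed (d : ℕ) (i : Fin n) (α : Fin n → ℕ) (h : ∀ j, j < i → α j = 0) :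
    act bs f (d+1) i α = E K (α + Pi.single i 1) := by
  rw [act, dif_pos h]

lemma act_not (d : ℕ) (i : Fin n) (α : Fin n → ℕ) (h : ¬ ∀ j, j < i → α j = 0) :
    act bs f (d+1) i α =
      (act bs f d i (α - Pi.single (lead α i) 1)).sum
          (fun γ c => c • act bs f (d+1) (lead α i) γ)
        + (bs.repr ⁅bs i, bs (lead α i)⁆).sum
            (fun k r => r • act bs f d k (α - Pi.single (lead α i) 1))
        + f (bs i) (bs (lead α i)) • E K (α - Pi.single (lead α i) 1) := by
  rw [act]; exact dif_neg h

end SridharanAux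

namespace SridharanAux

variable {K : Type*} [Field K] {g : Type*} [LieRing g] [LieAlgebra K g]
variable {n : ℕ} (bs : Module.Basis (Fin n) K g) (f : g →ₗ[K] g →ₗ[K] K)

lemma lead_ne' {α : Fin n → ℕ} {i : Fin n} (h : ¬ ∀ j, j < i → α j = 0) :
    α (lead α i) ≠ 0 := by
  push_neg at h
  obtain ⟨j, _, hj⟩ := h
  exact lead_ne hj i

lemma deg_split {α : Fin n → ℕ} {j : Fin n} (hj : α j ≠ 0) :
    deg α = deg (α - Pi.single j 1) + 1 := by
  conv_lhs => rw [exists_split hj]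
  rw [deg_add_single]

lemma act_support : ∀ (d : ℕ) (i : Fin n) (α : Fin n → ℕ),
    ∀ γ ∈ (act bs f d i α).support, deg γ ≤ deg α + 1 := by
  have H : ∀ d m, ∀ i : Fin n, (i : ℕ) = m → ∀ (α : Fin n → ℕ),
      ∀ γ ∈ (act bs f d i α).support, deg γ ≤ deg α + 1 := by
    refine lexInd ?_
    rintro d m IH1 IH2 i rfl α γ hγ
    match d with
    | 0 => simp [act] at hγ
    | d+1 =>
      by_cases h : ∀ j, j < i → α j = 0
      · rw [act_allowed bs f d i α h] at hγ
        rw [E, Finsupp.support_single_ne_zero _ one_ne_zero] at hγ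
        simp only [Finset.mem_singleton] at hγ
        subst hγ
        rw [deg_add_single]
      · rw [act_not bs f d i α h] at hγ
        set j := lead α i with hjdef
        set β := α - Pi.single j 1 with hβdef
        have hj : α j ≠ 0 := lead_ne' h
        have hdeg : deg α = deg β + 1 := deg_split hj
        have hji : (j : ℕ) < i := lead_lt h
        rcases Finset.mem_union.mp (Finsupp.support_add hγ) with hγ' | hγ'
        · rcases Finset.mem_union.mp (Finsupp.support_add hγ') with h1 | h2
          · obtain ⟨γ', hγ'mem, hγmem⟩ := Finset.mem_biUnion.mp (Finsupp.support_sum h1)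
            have hd1 : deg γ' ≤ deg β + 1 :=
              IH1 d i.1 (Nat.lt_succ_self d) i rfl β γ' hγ'mem
            have hγin : γ ∈ (act bs f (d+1) j γ').support :=
              Finset.mem_of_subset (Finsupp.support_smul) hγmem
            have hd2 : deg γ ≤ deg γ' + 1 := IH2 _ hji j rfl γ' γ hγin
            omega
          · obtain ⟨k, _, hγmem⟩ := Finset.mem_biUnion.mp (Finsupp.support_sum h2)
            have hγin : γ ∈ (act bs f d k β).support :=
              Finset.mem_of_subset (Finsupp.support_smul) hγmem
            have := IH1 d k.1 (Nat.lt_succ_self d) k rfl β γ hγin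
            omega
        · have hγin : γ ∈ (E K β : (Fin n → ℕ) →₀ K).support :=
            Finset.mem_of_subset (Finsupp.support_smul) hγ'
          rw [E, Finsupp.support_single_ne_zero _ one_ne_zero] at hγin
          simp only [Finset.mem_singleton] at hγin
          subst hγin
          omega
  exact fun d i α => H d i.1 i rfl α

end SridharanAux

namespace SridharanAux

variable {K : Type*} [Field K] {g : Type*} [LieRing g] [LieAlgebra K g]
variable {n : ℕ} (bs : Module.Basis (Fin n) K g) (f : g →ₗ[K] g →ₗ[K] K)

lemma act_fuel : ∀ (d : ℕ) (i : Fin n) (α : Fin n → ℕ), deg α < d →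
    act bs f d i α = act bs f (deg α + 1) i α := by
  have H : ∀ d m, ∀ i : Fin n, (i : ℕ) = m → ∀ (α : Fin n → ℕ), deg α < d →
      act bs f d i α = act bs f (deg α + 1) i α := by
    refine lexInd ?_
    rintro d m IH1 IH2 i rfl α hα
    match d with
    | 0 => omega
    | d+1 =>
      by_cases h : ∀ j, j < i → α j = 0
      · rw [act_allowed bs f d i α h, act_allowed bs f (deg α) i α h]
      · rw [act_not bs f d i α h, act_not bs f (deg α) i α h]
        set j := lead α i with hjdef
        set β := α - Pi.single j 1 with hβdef
        have hj : α j ≠ 0 := lead_ne' h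
        have hdeg : deg α = deg β + 1 := deg_split hj
        have hji : (j : ℕ) < i := lead_lt h
        have hβd : deg β < d := by omega
        have hβd' : deg β < deg α := by omega
        have e1 : act bs f d i β = act bs f (deg α) i β := by
          rw [IH1 d i.1 (Nat.lt_succ_self d) i rfl β hβd, hdeg]
        congr 1
        congr 1
        · rw [e1]
          refine Finsupp.sum_congr (fun γ hγ => ?_)
          have hγd : deg γ ≤ deg α := by
            have := act_support bs f (deg α) i β γ hγ
            omega
          have r1 : act bs f (d+1) j γ = act bs f (deg γ + 1) j γ :=
            IH2 j.1 hji j rfl γ (by omega)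
          have r2 : act bs f (deg α + 1) j γ = act bs f (deg γ + 1) j γ := by
            rcases Nat.lt_or_ge (deg α + 1) (d+1) with hc | hc
            · exact IH1 (deg α + 1) j.1 hc j rfl γ (by omega)
            · have : deg α = d := by omega
              subst this
              exact IH2 j.1 hji j rfl γ (by omega)
          rw [r1, r2]
        · refine Finsupp.sum_congr (fun k _ => ?_)
          rw [IH1 d k.1 (Nat.lt_succ_self d) k rfl β hβd, hdeg]
  exact fun d i α h => H d i.1 i rfl α h

end SridharanAux

namespace SridharanAux

variable {K : Type*} [Field K] {g : Type*} [LieRing g] [LieAlgebra K g]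
variable {n : ℕ} (bs : Module.Basis (Fin n) K g) (f : g →ₗ[K] g →ₗ[K] K)

/-- The operator representing `x_i` on the monomial space. -/
noncomputable def X (i : Fin n) : ((Fin n → ℕ) →₀ K) →ₗ[K] ((Fin n → ℕ) →₀ K) :=
  Finsupp.linearCombination K (fun α => act bs f (deg α + 1) i α)

/-- The representation map on `g`. -/
noncomputable def phi : g →ₗ[K] ((Fin n → ℕ) →₀ K) →ₗ[K] ((Fin n → ℕ) →₀ K) :=
  bs.constr K (X bs f)

lemma X_single (i : Fin n) (α : Fin n → ℕ) :
    X bs f i (E K α) = act bs f (deg α + 1) i α := by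
  rw [X, E, Finsupp.linearCombination_single, one_smul]

lemma phi_basis (i : Fin n) : phi bs f (bs i) = X bs f i := by
  rw [phi, Module.Basis.constr_basis]

lemma phi_apply (z : g) (p : (Fin n → ℕ) →₀ K) :
    phi bs f z p = (bs.repr z).sum fun k r => r • X bs f k p := by
  rw [phi, Module.Basis.constr_apply]
  simp [Finsupp.sum, LinearMap.sum_apply]

lemma sum_smul_E {M : Type*} [AddCommMonoid M] [Module K M]
    (p : (Fin n → ℕ) →₀ K) (T : ((Fin n → ℕ) →₀ K) →ₗ[K] M) :
    (p.sum fun γ c => c • T (E K γ)) = T p := by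
  conv_rhs => rw [← Finsupp.sum_single p]
  rw [map_finsuppSum]
  refine Finsupp.sum_congr fun γ _ => ?_
  rw [E, ← map_smul, Finsupp.smul_single', mul_one]

lemma X_apply_E_allowed (i : Fin n) (α : Fin n → ℕ) (h : ∀ j, j < i → α j = 0) :
    X bs f i (E K α) = E K (α + Pi.single i 1) := by
  rw [X_single, act_allowed]
  exact h

lemma X_apply_E_not (i : Fin n) (α : Fin n → ℕ) (h : ¬ ∀ j, j < i → α j = 0) :
    X bs f i (E K α) =
      X bs f (lead α i) (X bs f i (E K (α - Pi.single (lead α i) 1)))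
      + phi bs f ⁅bs i, bs (lead α i)⁆ (E K (α - Pi.single (lead α i) 1))
      + f (bs i) (bs (lead α i)) • E K (α - Pi.single (lead α i) 1) := by
  set j := lead α i with hjdef
  set β := α - Pi.single j 1 with hβdef
  have hj : α j ≠ 0 := lead_ne' h
  have hdeg : deg α = deg β + 1 := deg_split hj
  rw [X_single, show deg α + 1 = (deg α) + 1 from rfl, act_not bs f (deg α) i α h]
  rw [← hjdef, ← hβdef]
  congr 1
  congr 1
  · have e1 : act bs f (deg α) i β = X bs f i (E K β) := by
      rw [X_single, hdeg]
    rw [e1, ← sum_smul_E (X bs f i (E K β)) (X bs f j)]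
    refine Finsupp.sum_congr fun γ hγ => ?_
    rw [X_single bs f i β] at hγ
    have hγd : deg γ ≤ deg α := by
      have := act_support bs f (deg β + 1) i β γ hγ
      omega
    rw [X_single bs f j γ, act_fuel bs f (deg α + 1) j γ (by omega)]
  · rw [phi_apply]
    refine Finsupp.sum_congr fun k _ => ?_
    rw [X_single, hdeg]

/-- degree bound predicate -/
def bdd (p : (Fin n → ℕ) →₀ K) (N : ℕ) : Prop := ∀ γ ∈ p.support, deg γ ≤ N

lemma bdd_mono {p : (Fin n → ℕ) →₀ K} {N N' : ℕ} (h : bdd p N) (hN : N ≤ N') : bdd p N' :=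
  fun γ hγ => le_trans (h γ hγ) hN

lemma bdd_E (α : Fin n → ℕ) : bdd (E K α) (deg α) := by
  intro γ hγ
  rw [E, Finsupp.support_single_ne_zero _ one_ne_zero] at hγ
  simp only [Finset.mem_singleton] at hγ
  subst hγ; rfl

lemma bdd_zero (N : ℕ) : bdd (0 : (Fin n → ℕ) →₀ K) N := by
  intro γ hγ; simp at hγ

lemma bdd_add {p q : (Fin n → ℕ) →₀ K} {N : ℕ} (hp : bdd p N) (hq : bdd q N) :
    bdd (p + q) N := by
  intro γ hγ
  rcases Finset.mem_union.mp (Finsupp.support_add hγ) with h | h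
  exacts [hp γ h, hq γ h]

lemma bdd_smul {p : (Fin n → ℕ) →₀ K} {N : ℕ} (c : K) (hp : bdd p N) : bdd (c • p) N :=
  fun γ hγ => hp γ (Finset.mem_of_subset Finsupp.support_smul hγ)

lemma bdd_finsupp_sum {ι M : Type*} [Zero M] {q : ι →₀ M} {F : ι → M → (Fin n → ℕ) →₀ K}
    {N : ℕ} (h : ∀ k ∈ q.support, bdd (F k (q k)) N) : bdd (q.sum F) N := by
  intro γ hγ
  obtain ⟨k, hk, hγk⟩ := Finset.mem_biUnion.mp (Finsupp.support_sum hγ)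
  exact h k hk γ hγk

lemma bdd_X {p : (Fin n → ℕ) →₀ K} {N : ℕ} (i : Fin n) (hp : bdd p N) :
    bdd (X bs f i p) (N + 1) := by
  rw [X, Finsupp.linearCombination_apply]
  refine bdd_finsupp_sum fun γ hγ => bdd_smul _ (fun δ hδ => ?_)
  have := act_support bs f (deg γ + 1) i γ δ hδ
  have := hp γ hγ
  omega

lemma bdd_phi {p : (Fin n → ℕ) →₀ K} {N : ℕ} (z : g) (hp : bdd p N) :
    bdd (phi bs f z p) (N + 1) := by
  rw [phi_apply]
  exact bdd_finsupp_sum fun k _ => bdd_smul _ (bdd_X bs f k hp)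

end SridharanAux

namespace SridharanAux

variable {K : Type*} [Field K] {g : Type*} [LieRing g] [LieAlgebra K g]
variable {n : ℕ} (bs : Module.Basis (Fin n) K g) (f : g →ₗ[K] g →ₗ[K] K)

/-- The key commutation property. -/
def CommP (i j : Fin n) (p : (Fin n → ℕ) →₀ K) : Prop :=
  X bs f i (X bs f j p) = X bs f j (X bs f i p) + phi bs f ⁅bs i, bs j⁆ p
    + f (bs i) (bs j) • p

lemma CommP_add {i j : Fin n} {p q : (Fin n → ℕ) →₀ K}
    (hp : CommP bs f i j p) (hq : CommP bs f i j q) : CommP bs f i j (p + q) := by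
  unfold CommP at *
  simp only [map_add, smul_add, hp, hq]
  abel

lemma CommP_smul {i j : Fin n} {p : (Fin n → ℕ) →₀ K} (c : K)
    (hp : CommP bs f i j p) : CommP bs f i j (c • p) := by
  unfold CommP at *
  simp only [map_smul, hp, smul_add, smul_comm c]

lemma CommP_zero (i j : Fin n) : CommP bs f i j 0 := by
  unfold CommP; simp

lemma CommP_support {i j : Fin n} {p : (Fin n → ℕ) →₀ K}
    (h : ∀ γ ∈ p.support, CommP bs f i j (E K γ)) : CommP bs f i j p := by
  rw [← Finsupp.sum_single p]
  rw [Finsupp.sum]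
  refine Finset.sum_induction _ _ (fun a b ha hb => CommP_add bs f ha hb)
    (CommP_zero bs f i j) (fun γ hγ => ?_)
  have : Finsupp.single γ (p γ) = p γ • E K γ := by
    rw [E, Finsupp.smul_single', mul_one]
  rw [this]
  exact CommP_smul bs f _ (h γ hγ)

lemma f_skew (halt : ∀ x : g, f x x = 0) (x y : g) : f y x = - f x y := by
  have h := halt (x + y)
  simp only [map_add, LinearMap.add_apply, halt] at h
  linear_combination h

lemma comm_diag (halt : ∀ x : g, f x x = 0) (i : Fin n) (p : (Fin n → ℕ) →₀ K) :
    CommP bs f i i p := by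
  unfold CommP
  rw [lie_self, map_zero, halt]
  simp

lemma comm_symm (halt : ∀ x : g, f x x = 0) {i j : Fin n} {p : (Fin n → ℕ) →₀ K}
    (h : CommP bs f i j p) : CommP bs f j i p := by
  unfold CommP at *
  rw [← lie_skew, map_neg, f_skew f halt, h]
  simp only [LinearMap.neg_apply, neg_smul]
  abel

lemma comm_S1 (α : Fin n → ℕ) {i j : Fin n} (hji : j < i) (hall : ∀ k, k < j → α k = 0) :
    CommP bs f i j (E K α) := by
  unfold CommP
  rw [X_apply_E_allowed bs f j α hall]
  have hnz : (α + Pi.single j 1 : Fin n → ℕ) j ≠ 0 := by simp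
  have hnot : ¬ ∀ k, k < i → (α + Pi.single j 1 : Fin n → ℕ) k = 0 := by
    push_neg
    exact ⟨j, hji, hnz⟩
  have hall' : ∀ k, k < j → (α + Pi.single j 1 : Fin n → ℕ) k = 0 := by
    intro k hk
    have : (k : Fin n) ≠ j := ne_of_lt hk
    simp [Pi.single_apply, this, hall k hk]
  have hlead : lead (α + Pi.single j 1) i = j := lead_eq hnz hall' i
  have hsub : (α + Pi.single j 1) - Pi.single j 1 = α := by
    funext k
    simp
  rw [X_apply_E_not bs f i _ hnot, hlead, hsub]

/-- leading-term decomposition -/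
lemma X_lead_term : ∀ (α : Fin n → ℕ) (i : Fin n),
    ∃ r, X bs f i (E K α) = E K (α + Pi.single i 1) + r ∧ bdd r (deg α) := by
  have H : ∀ d m, ∀ (α : Fin n → ℕ) (i : Fin n), deg α = d → (i : ℕ) = m →
      ∃ r, X bs f i (E K α) = E K (α + Pi.single i 1) + r ∧ bdd r (deg α) := by
    refine lexInd ?_
    rintro d m IH1 IH2 α i rfl rfl
    by_cases h : ∀ j, j < i → α j = 0
    · exact ⟨0, by rw [X_apply_E_allowed bs f i α h, add_zero], bdd_zero _⟩
    · set j := lead α i with hjdef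
      set β := α - Pi.single j 1 with hβdef
      have hj : α j ≠ 0 := lead_ne' h
      have hαβ : α = β + Pi.single j 1 := exists_split hj
      have hdeg : deg α = deg β + 1 := deg_split hj
      have hji : (j : ℕ) < i := lead_lt h
      obtain ⟨r1, h1, hb1⟩ := IH1 (deg β) i.1 (by omega) β i rfl rfl
      obtain ⟨r2, h2, hb2⟩ := IH2 j.1 hji (β + Pi.single i 1) j
        (by rw [deg_add_single]; omega) rfl
      refine ⟨r2 + X bs f j r1 + phi bs f ⁅bs i, bs j⁆ (E K β)
        + f (bs i) (bs j) • E K β, ?_, ?_⟩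
      · rw [X_apply_E_not bs f i α h, ← hjdef, ← hβdef, h1, map_add, h2]
        have : β + Pi.single i 1 + Pi.single j 1 = α + Pi.single i 1 := by
          rw [hαβ]; funext k; simp; ring
        rw [this]
        abel
      · have e2 : deg (β + Pi.single i 1) = deg α := by rw [deg_add_single]; omega
        refine bdd_add (bdd_add (bdd_add ?_ ?_) ?_) ?_
        · rw [← e2]; exact hb2
        · exact bdd_mono (bdd_X bs f j hb1) (by omega)
        · exact bdd_mono (bdd_phi bs f _ (bdd_E β)) (by omega)
        · exact bdd_smul _ (bdd_mono (bdd_E β) (by omega))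
  exact fun α i => H (deg α) i.1 α i rfl rfl

end SridharanAux

namespace SridharanAux

variable {K : Type*} [Field K] {g : Type*} [LieRing g] [LieAlgebra K g]
variable {n : ℕ} (bs : Module.Basis (Fin n) K g) (f : g →ₗ[K] g →ₗ[K] K)

lemma commZ {β : Fin n → ℕ} {a : Fin n} (hIH : ∀ t, CommP bs f a t (E K β)) (z : g) :
    X bs f a (phi bs f z (E K β)) = phi bs f z (X bs f a (E K β))
      + phi bs f ⁅bs a, z⁆ (E K β) + f (bs a) z • E K β := by
  have key : (X bs f a).comp ((phi bs f).flip (E K β)) =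
      ((phi bs f).flip (X bs f a (E K β)))
      + ((phi bs f).flip (E K β)).comp (LieAlgebra.ad K g (bs a))
      + (f (bs a)).smulRight (E K β) := by
    refine bs.ext fun t => ?_
    simp only [LinearMap.comp_apply, LinearMap.add_apply, LinearMap.flip_apply,
      LinearMap.smulRight_apply, LieAlgebra.ad_apply, phi_basis]
    exact hIH t
  have := LinearMap.congr_fun key z
  simpa only [LinearMap.comp_apply, LinearMap.add_apply, LinearMap.flip_apply,
    LinearMap.smulRight_apply, LieAlgebra.ad_apply] using this

lemma comm_main (halt : ∀ x : g, f x x = 0)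
    (hcocycle : ∀ x y z : g, f x ⁅y, z⁆ + f z ⁅x, y⁆ + f y ⁅z, x⁆ = 0) :
    ∀ (N : ℕ) (α : Fin n → ℕ), deg α < N → ∀ i j, CommP bs f i j (E K α) := by
  intro N
  induction N using Nat.strong_induction_on with
  | _ N IH =>
    intro α hα i j
    have IHlow : ∀ γ : Fin n → ℕ, deg γ < deg α → ∀ a b, CommP bs f a b (E K γ) :=
      fun γ hγ a b => IH (deg α) hα γ hγ a b
    have main : ∀ i j : Fin n, j < i → CommP bs f i j (E K α) := by
      intro i j hji
      by_cases hall : ∀ k, k < j → α k = 0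
      · exact comm_S1 bs f α hji hall
      · -- the hard case
        set k := lead α j with hkdef
        have hk : α k ≠ 0 := lead_ne' hall
        have hkj : k < j := lead_lt hall
        have hkm : ∀ m, m < k → α m = 0 := fun m hm => lead_min j hm
        set β := α - Pi.single k 1 with hβdef
        have hαβ : α = β + Pi.single k 1 := exists_split hk
        have hdeg : deg α = deg β + 1 := deg_split hk
        have hβall : ∀ m, m < k → β m = 0 := by
          intro m hm
          have : (m : Fin n) ≠ k := ne_of_lt hm
          rw [hβdef]
          simp [Pi.single_apply, this, hkm m hm]
        have hEα : E K α = X bs f k (E K β) := by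
          rw [X_apply_E_allowed bs f k β hβall, ← hαβ]
        have IHβ : ∀ a b, CommP bs f a b (E K β) :=
          IHlow β (by omega)
        -- commutation of (a, k) on X c (E β) for k < a, k < c
        have comm_top : ∀ a c : Fin n, k < a → k < c →
            CommP bs f a k (X bs f c (E K β)) := by
          intro a c hka hkc
          obtain ⟨r, hr, hbr⟩ := X_lead_term bs f β c
          rw [hr]
          refine CommP_add bs f ?_ ?_
          · refine comm_S1 bs f _ hka ?_
            intro m hm
            have hmc : (m : Fin n) ≠ c := ne_of_lt (lt_trans hm hkc)
            simp [Pi.single_apply, hmc, hβall m hm]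
          · refine CommP_support bs f fun γ hγ => ?_
            exact IHlow γ (by have := hbr γ hγ; omega) a k
        -- now assemble
        unfold CommP
        rw [hEα]
        have A0 := IHβ j k
        have B0 := IHβ i k
        have C0 := IHβ i j
        unfold CommP at A0 B0 C0
        have h1 := comm_top i j (lt_trans hkj hji) hkj
        have h2 := comm_top j i hkj (lt_trans hkj hji)
        unfold CommP at h1 h2
        have hA := congrArg (X bs f i) A0
        simp only [map_add, map_smul] at hA
        have hB := congrArg (X bs f j) B0
        simp only [map_add, map_smul] at hB
        have hC := congrArg (X bs f k) C0
        simp only [map_add, map_smul] at hC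
        have cz1 := commZ bs f (fun t => IHβ i t) ⁅bs j, bs k⁆
        have cz2 := commZ bs f (fun t => IHβ j t) ⁅bs i, bs k⁆
        have cz3 := commZ bs f (fun t => IHβ k t) ⁅bs i, bs j⁆
        -- Jacobi identity pushed through phi
        have hin : ⁅bs k, bs i⁆ = -⁅bs i, bs k⁆ := (lie_skew (bs k) (bs i)).symm
        have hjac2 : ⁅bs i, ⁅bs j, bs k⁆⁆ + ⁅bs k, ⁅bs i, bs j⁆⁆ - ⁅bs j, ⁅bs i, bs k⁆⁆ = 0 := by
          have h := lie_jacobi (bs i) (bs j) (bs k)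
          rw [hin, lie_neg] at h
          abel_nf at h ⊢
          exact h
        have hphijac : phi bs f ⁅bs i, ⁅bs j, bs k⁆⁆ (E K β)
            + phi bs f ⁅bs k, ⁅bs i, bs j⁆⁆ (E K β)
            - phi bs f ⁅bs j, ⁅bs i, bs k⁆⁆ (E K β) = 0 := by
          have h : phi bs f (⁅bs i, ⁅bs j, bs k⁆⁆ + ⁅bs k, ⁅bs i, bs j⁆⁆
              - ⁅bs j, ⁅bs i, bs k⁆⁆) (E K β) = 0 := by
            rw [hjac2, map_zero, LinearMap.zero_apply]
          rw [map_sub, map_add] at h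
          simpa only [LinearMap.add_apply, LinearMap.sub_apply] using h
        have hcoc : f (bs i) ⁅bs j, bs k⁆ + f (bs k) ⁅bs i, bs j⁆
            - f (bs j) ⁅bs i, bs k⁆ = 0 := by
          have h := hcocycle (bs i) (bs j) (bs k)
          rw [hin, map_neg] at h
          linear_combination h
        have hcocm : (f (bs i) ⁅bs j, bs k⁆) • E K β + (f (bs k) ⁅bs i, bs j⁆) • E K β
            - (f (bs j) ⁅bs i, bs k⁆) • E K β = 0 := by
          rw [← add_smul, ← sub_smul, hcoc, zero_smul]
        -- final assembly
        linear_combination (norm := module) hA + h1 + hC + cz1 - hB - h2 - cz2 + cz3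
          + hphijac + hcocm
    rcases lt_trichotomy (j : ℕ) (i : ℕ) with hlt | heq | hgt
    · exact main i j hlt
    · have : i = j := Fin.ext heq.symm
      subst this
      exact comm_diag bs f halt i _
    · exact comm_symm bs f halt (main j i hgt)

end SridharanAux

namespace SridharanAux

section MonomLemmas

variable {A : Type*} [Monoid A]

lemma monom_zero {n : ℕ} (x : Fin n → A) : monom x 0 = 1 := by
  rw [monom]
  simp

lemma monom_succ {n : ℕ} (x : Fin (n+1) → A) (α : Fin (n+1) → ℕ) :
    monom x α = x 0 ^ α 0 * monom (x ∘ Fin.succ) (α ∘ Fin.succ) := by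
  rw [monom, List.ofFn_succ, List.prod_cons]
  rfl

lemma monom_single_mul : ∀ {n : ℕ} (x : Fin n → A) (α : Fin n → ℕ) (i : Fin n),
    (∀ j, j < i → α j = 0) → x i * monom x α = monom x (α + Pi.single i 1) := by
  intro n
  induction n with
  | zero => exact fun x α i _ => i.elim0
  | succ n ih =>
    intro x α i h
    cases i using Fin.cases with
    | zero =>
      rw [monom_succ, monom_succ]
      have h1 : ((α + Pi.single 0 1 : Fin (n+1) → ℕ)) ∘ Fin.succ = α ∘ Fin.succ := by
        funext j
        simp [Pi.single_apply, (Fin.succ_ne_zero j)]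
      have h2 : (α + Pi.single 0 1 : Fin (n+1) → ℕ) 0 = α 0 + 1 := by simp
      rw [h1, h2, ← mul_assoc, ← pow_succ']
    | succ i' =>
      have hα0 : α 0 = 0 := h 0 (Fin.succ_pos i')
      rw [monom_succ, monom_succ]
      have h2 : (α + Pi.single i'.succ 1 : Fin (n+1) → ℕ) 0 = α 0 := by
        simp [Pi.single_apply, (Fin.succ_ne_zero i').symm]
      have h1 : ((α + Pi.single i'.succ 1 : Fin (n+1) → ℕ)) ∘ Fin.succ
          = (α ∘ Fin.succ) + Pi.single i' 1 := by
        funext j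
        simp [Pi.single_apply, Fin.succ_inj]
      rw [h1, h2, hα0, pow_zero, one_mul, one_mul, ← ih (x ∘ Fin.succ) (α ∘ Fin.succ) i'
        (fun j hj => h j.succ (Fin.succ_lt_succ_iff.mpr hj))]
      rfl

end MonomLemmas

variable {K : Type*} [Field K] {g : Type*} [LieRing g] [LieAlgebra K g]
variable {n : ℕ} (bs : Module.Basis (Fin n) K g) (f : g →ₗ[K] g →ₗ[K] K)

lemma comm_all (halt : ∀ x : g, f x x = 0)
    (hcocycle : ∀ x y z : g, f x ⁅y, z⁆ + f z ⁅x, y⁆ + f y ⁅z, x⁆ = 0)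
    (i j : Fin n) (p : (Fin n → ℕ) →₀ K) : CommP bs f i j p := by
  refine CommP_support bs f fun γ _ => ?_
  exact comm_main bs f halt hcocycle (deg γ + 1) γ (Nat.lt_succ_self _) i j

end SridharanAux

namespace SridharanAux

variable {K : Type*} [Field K] {g : Type*} [LieRing g] [LieAlgebra K g]
variable {n : ℕ} (bs : Module.Basis (Fin n) K g) (f : g →ₗ[K] g →ₗ[K] K)

/-- the bilinear "defect" of the commutation relation -/
noncomputable def commDefect : g →ₗ[K] g →ₗ[K] Module.End K ((Fin n → ℕ) →₀ K) :=
  LinearMap.mk₂ K (fun x y => phi bs f x * phi bs f y - phi bs f y * phi bs f x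
      - phi bs f ⁅x, y⁆ - f x y • (1 : Module.End K ((Fin n → ℕ) →₀ K)))
    (by intro m₁ m₂ o
        simp only [map_add, add_lie, LinearMap.add_apply, add_mul, mul_add, add_smul]
        module)
    (by intro c m o
        simp only [map_smul, smul_lie, LinearMap.smul_apply, smul_mul_assoc,
          mul_smul_comm, smul_eq_mul, mul_smul]
        module)
    (by intro m o₁ o₂
        simp only [map_add, lie_add, LinearMap.add_apply, add_mul, mul_add, add_smul]
        module)
    (by intro c m o
        simp only [map_smul, lie_smul, LinearMap.smul_apply, smul_mul_assoc,
          mul_smul_comm, smul_eq_mul, mul_smul]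
        module)

lemma commDefect_apply (x y : g) :
    commDefect bs f x y = phi bs f x * phi bs f y - phi bs f y * phi bs f x
      - phi bs f ⁅x, y⁆ - f x y • (1 : Module.End K ((Fin n → ℕ) →₀ K)) := rfl

lemma commDefect_eq_zero (halt : ∀ x : g, f x x = 0)
    (hcocycle : ∀ x y z : g, f x ⁅y, z⁆ + f z ⁅x, y⁆ + f y ⁅z, x⁆ = 0) :
    commDefect bs f = 0 := by
  refine bs.ext fun i => ?_
  refine bs.ext fun j => ?_
  rw [commDefect_apply]
  simp only [LinearMap.zero_apply]
  refine LinearMap.ext fun p => ?_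
  have hc := comm_all bs f halt hcocycle i j p
  unfold CommP at hc
  simp only [LinearMap.sub_apply, Module.End.mul_apply,
    LinearMap.smul_apply, Module.End.one_apply, LinearMap.zero_apply, phi_basis]
  rw [hc]
  abel

lemma phi_rel (halt : ∀ x : g, f x x = 0)
    (hcocycle : ∀ x y z : g, f x ⁅y, z⁆ + f z ⁅x, y⁆ + f y ⁅z, x⁆ = 0) (x y : g) :
    phi bs f x * phi bs f y = phi bs f y * phi bs f x + phi bs f ⁅x, y⁆
      + f x y • (1 : Module.End K ((Fin n → ℕ) →₀ K)) := by
  have hxy := LinearMap.congr_fun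
    (LinearMap.congr_fun (commDefect_eq_zero bs f halt hcocycle) x) y
  rw [commDefect_apply] at hxy
  refine LinearMap.ext fun p => ?_
  have hp := LinearMap.congr_fun hxy p
  simp only [LinearMap.sub_apply, LinearMap.zero_apply, LinearMap.add_apply,
    LinearMap.smul_apply, Module.End.one_apply, Module.End.mul_apply] at hp ⊢
  rw [sub_sub, sub_sub, sub_eq_zero] at hp
  rw [hp]
  abel

end SridharanAux

namespace SridharanAux

variable {K : Type*} [Field K] {g : Type*} [LieRing g] [LieAlgebra K g]
variable {n : ℕ} (bs : Module.Basis (Fin n) K g) (f : g →ₗ[K] g →ₗ[K] K)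

lemma monomX_apply : ∀ (N : ℕ) (α γ : Fin n → ℕ), deg α < N →
    (∀ a b : Fin n, α a ≠ 0 → γ b ≠ 0 → a ≤ b) →
    monom (X bs f) α (E K γ) = E K (α + γ) := by
  intro N
  induction N using Nat.strong_induction_on with
  | _ N IH =>
    intro α γ hN hyp
    by_cases hz : α = 0
    · subst hz
      rw [monom_zero, zero_add]
      rfl
    · obtain ⟨t, ht⟩ := Function.ne_iff.mp hz
      simp only [Pi.zero_apply] at ht
      set i := lead α t with hidef
      have hi : α i ≠ 0 := lead_ne ht t
      have him : ∀ m, m < i → α m = 0 := fun m hm => lead_min t hm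
      set β := α - Pi.single i 1 with hβdef
      have hαβ : α = β + Pi.single i 1 := exists_split hi
      have hdeg : deg α = deg β + 1 := deg_split hi
      have hβall : ∀ m, m < i → β m = 0 := by
        intro m hm
        have hne : (m : Fin n) ≠ i := ne_of_lt hm
        rw [hβdef]
        simp [Pi.single_apply, hne, him m hm]
      have hβle : ∀ a, β a ≠ 0 → α a ≠ 0 := by
        intro a ha
        by_contra hc
        apply ha
        rw [hβdef]
        simp [Pi.single_apply, hc]
      have hm : X bs f i * monom (X bs f) β = monom (X bs f) α := by
        rw [monom_single_mul (X bs f) β i hβall, ← hαβ]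
      rw [← hm]
      rw [Module.End.mul_apply]
      rw [IH (deg β + 1) (by omega) β γ (Nat.lt_succ_self _)
        (fun a b ha hb => hyp a b (hβle a ha) hb)]
      rw [X_apply_E_allowed bs f i (β + γ) ?hallow]
      · congr 1
        rw [hαβ]
        funext k
        simp
        ring
      · intro m hm'
        have h1 : β m = 0 := hβall m hm'
        have h2 : γ m = 0 := by
          by_contra hc
          exact absurd (hyp i m hi hc) (not_le.mpr hm')
        simp [h1, h2]

end SridharanAux

namespace SridharanAux

variable {K : Type*} [Field K] {g : Type*} [LieRing g] [LieAlgebra K g]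
variable {n : ℕ} (bs : Module.Basis (Fin n) K g) (f : g →ₗ[K] g →ₗ[K] K)

/-- generators of the Sridharan algebra -/
noncomputable def gU (i : Fin n) : RingQuot (sridharanRel K g f) :=
  RingQuot.mkAlgHom K (sridharanRel K g f) (TensorAlgebra.ι K (bs i))

/-- the straightening map -/
noncomputable def theta : ((Fin n → ℕ) →₀ K) →ₗ[K] RingQuot (sridharanRel K g f) :=
  Finsupp.linearCombination K (fun α => monom (gU bs f) α)

lemma theta_E (α : Fin n → ℕ) : theta bs f (E K α) = monom (gU bs f) α := by
  rw [theta, E, Finsupp.linearCombination_single, one_smul]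

lemma gU_repr (z : g) :
    ((bs.repr z).sum fun k r => r • gU bs f k)
      = RingQuot.mkAlgHom K (sridharanRel K g f) (TensorAlgebra.ι K z) := by
  conv_rhs => rw [← Module.Basis.linearCombination_repr bs z]
  rw [Finsupp.linearCombination_apply, map_finsuppSum, map_finsuppSum]
  exact Finsupp.sum_congr fun k _ => by rw [map_smul, map_smul]; rfl

lemma rel_U (i j : Fin n) :
    gU bs f i * gU bs f j = gU bs f j * gU bs f i
      + RingQuot.mkAlgHom K (sridharanRel K g f) (TensorAlgebra.ι K ⁅bs i, bs j⁆)
      + algebraMap K (RingQuot (sridharanRel K g f)) (f (bs i) (bs j)) := by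
  have h := RingQuot.mkAlgHom_rel K
    (show sridharanRel K g f (TensorAlgebra.ι K (bs i) * TensorAlgebra.ι K (bs j))
      (TensorAlgebra.ι K (bs j) * TensorAlgebra.ι K (bs i)
        + TensorAlgebra.ι K ⁅bs i, bs j⁆
        + algebraMap K (TensorAlgebra K g) (f (bs i) (bs j)))
      from ⟨bs i, bs j, rfl, rfl⟩)
  simp only [map_mul, map_add, AlgHom.commutes] at h
  exact h

lemma theta_comp_sum (i : Fin n) (p : (Fin n → ℕ) →₀ K)
    (hsingle : ∀ γ ∈ p.support,
      theta bs f (X bs f i (E K γ)) = gU bs f i * theta bs f (E K γ)) :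
    theta bs f (X bs f i p) = gU bs f i * theta bs f p := by
  conv_lhs => rw [← sum_smul_E p (X bs f i)]
  rw [map_finsuppSum]
  conv_rhs => rw [← sum_smul_E p (theta bs f)]
  rw [Finsupp.mul_sum]
  refine Finsupp.sum_congr fun γ hγ => ?_
  rw [map_smul, hsingle γ hγ, mul_smul_comm]

lemma thetaX_single : ∀ (α : Fin n → ℕ) (i : Fin n),
    theta bs f (X bs f i (E K α)) = gU bs f i * theta bs f (E K α) := by
  have H : ∀ d m, ∀ (α : Fin n → ℕ) (i : Fin n), deg α = d → (i : ℕ) = m →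
      theta bs f (X bs f i (E K α)) = gU bs f i * theta bs f (E K α) := by
    refine lexInd ?_
    rintro d m IH1 IH2 α i rfl rfl
    by_cases h : ∀ j, j < i → α j = 0
    · rw [X_apply_E_allowed bs f i α h, theta_E, theta_E,
        ← monom_single_mul (gU bs f) α i h]
    · set j := lead α i with hjdef
      set β := α - Pi.single j 1 with hβdef
      have hj : α j ≠ 0 := lead_ne' h
      have hαβ : α = β + Pi.single j 1 := exists_split hj
      have hdeg : deg α = deg β + 1 := deg_split hj
      have hji : (j : ℕ) < i := lead_lt h
      have hβall : ∀ m, m < j → β m = 0 := by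
        intro m hm
        have hne : (m : Fin n) ≠ j := ne_of_lt hm
        rw [hβdef]
        simp [Pi.single_apply, hne, lead_min i hm]
      rw [X_apply_E_not bs f i α h, ← hjdef, ← hβdef]
      rw [map_add, map_add, map_smul]
      -- first summand
      have hXiβ : theta bs f (X bs f i (E K β)) = gU bs f i * theta bs f (E K β) :=
        IH1 (deg β) i.1 (by omega) β i rfl rfl
      have t1 : theta bs f (X bs f j (X bs f i (E K β)))
          = gU bs f j * (gU bs f i * theta bs f (E K β)) := by
        rw [theta_comp_sum bs f j (X bs f i (E K β)) ?hs, hXiβ]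
        case hs =>
          intro γ hγ
          have hbd : deg γ ≤ deg β + 1 := by
            have := bdd_X bs f i (bdd_E (K := K) β) γ
            rw [X_single] at hγ
            have h2 := act_support bs f (deg β + 1) i β γ hγ
            omega
          rcases Nat.lt_or_ge (deg γ) (deg α) with hc | hc
          · exact IH1 (deg γ) j.1 hc γ j rfl rfl
          · have : deg γ = deg α := by omega
            exact IH2 j.1 hji γ j this rfl
      -- second summand
      have t2 : theta bs f (phi bs f ⁅bs i, bs j⁆ (E K β))
          = RingQuot.mkAlgHom K (sridharanRel K g f)
              (TensorAlgebra.ι K ⁅bs i, bs j⁆) * theta bs f (E K β) := by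
        rw [phi_apply, map_finsuppSum, ← gU_repr bs f, Finsupp.sum_mul]
        refine Finsupp.sum_congr fun k _ => ?_
        rw [map_smul, IH1 (deg β) k.1 (by omega) β k rfl rfl, smul_mul_assoc]
      rw [t1, t2]
      -- right-hand side
      have hmα : theta bs f (E K α) = gU bs f j * theta bs f (E K β) := by
        rw [theta_E, theta_E, hαβ, ← monom_single_mul (gU bs f) β j hβall]
      rw [hmα, Algebra.smul_def]
      conv_rhs => rw [← mul_assoc, rel_U bs f i j, add_mul, add_mul, mul_assoc]
  exact fun α i => H (deg α) i.1 α i rfl rfl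

lemma thetaX (i : Fin n) (p : (Fin n → ℕ) →₀ K) :
    theta bs f (X bs f i p) = gU bs f i * theta bs f p :=
  theta_comp_sum bs f i p fun γ _ => thetaX_single bs f γ i

lemma theta_phi (z : g) (p : (Fin n → ℕ) →₀ K) :
    theta bs f (phi bs f z p)
      = RingQuot.mkAlgHom K (sridharanRel K g f) (TensorAlgebra.ι K z) * theta bs f p := by
  rw [phi_apply, map_finsuppSum, ← gU_repr bs f, Finsupp.sum_mul]
  refine Finsupp.sum_congr fun k _ => ?_
  rw [map_smul, thetaX, smul_mul_assoc]

end SridharanAux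

namespace SridharanAux

variable {K : Type*} [Field K] {g : Type*} [LieRing g] [LieAlgebra K g]
variable {n : ℕ} (bs : Module.Basis (Fin n) K g) (f : g →ₗ[K] g →ₗ[K] K)

lemma rhoT_rel (halt : ∀ x : g, f x x = 0)
    (hcocycle : ∀ x y z : g, f x ⁅y, z⁆ + f z ⁅x, y⁆ + f y ⁅z, x⁆ = 0) :
    ∀ ⦃u v⦄, sridharanRel K g f u v →
      TensorAlgebra.lift K (phi bs f) u = TensorAlgebra.lift K (phi bs f) v := by
  rintro u v ⟨x, y, rfl, rfl⟩
  simp only [map_mul, map_add, TensorAlgebra.lift_ι_apply, AlgHom.commutes]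
  rw [phi_rel bs f halt hcocycle x y, Algebra.algebraMap_eq_smul_one]

end SridharanAux

open SridharanAux in
theorem sridharan_PBW' (K : Type*) [Field K] (g : Type*) [LieRing g] [LieAlgebra K g]
    (n : ℕ) (bs : Module.Basis (Fin n) K g)
    (f : g →ₗ[K] g →ₗ[K] K)
    (halt : ∀ x : g, f x x = 0)
    (hcocycle : ∀ x y z : g, f x ⁅y, z⁆ + f z ⁅x, y⁆ + f y ⁅z, x⁆ = 0) :
    ∃ b : Module.Basis (Fin n → ℕ) K (RingQuot (sridharanRel K g f)), ∀ α : Fin n → ℕ,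
      b α = monom (fun i => RingQuot.mkAlgHom K (sridharanRel K g f)
              (TensorAlgebra.ι K (bs i))) α := by
  classical
  set ρU := RingQuot.liftAlgHom K
    ⟨TensorAlgebra.lift K (phi bs f), rhoT_rel bs f halt hcocycle⟩ with hρU
  have ρU_gU : ∀ i, ρU (gU bs f i) = X bs f i := by
    intro i
    rw [gU, hρU, RingQuot.liftAlgHom_mkAlgHom_apply, TensorAlgebra.lift_ι_apply, phi_basis]
  have ρU_m : ∀ α, ρU (monom (gU bs f) α) = monom (X bs f) α := by
    intro α
    rw [monom, monom, map_list_prod, List.map_ofFn]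
    have he : (⇑ρU ∘ fun i => gU bs f i ^ α i) = fun i => X bs f i ^ α i := by
      funext i
      simp only [Function.comp_apply, map_pow, ρU_gU]
    rw [he]
  have ev_m : ∀ α, ρU (monom (gU bs f) α) (E K 0) = E K α := by
    intro α
    rw [ρU_m, monomX_apply bs f (deg α + 1) α 0 (Nat.lt_succ_self _)
      (by intro a b _ hb; simp at hb)]
    rw [add_zero]
  have retr : ∀ l : (Fin n → ℕ) →₀ K, ρU (theta bs f l) (E K 0) = l := by
    intro l
    induction l using Finsupp.induction_linear with
    | zero => simp
    | add p q hp hq => rw [map_add, map_add, LinearMap.add_apply, hp, hq]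
    | single γ c =>
      have hs : (Finsupp.single γ c : (Fin n → ℕ) →₀ K) = c • E K γ := by
        rw [E, Finsupp.smul_single', mul_one]
      rw [hs, map_smul, map_smul, LinearMap.smul_apply, theta_E, ev_m]
  have hli : LinearIndependent K (fun α => monom (gU bs f) α) := by
    rw [linearIndependent_iff]
    intro l hl
    have h := retr l
    have he : theta bs f l = 0 := hl
    rw [he, map_zero, LinearMap.zero_apply] at h
    exact h.symm
  have hsec : ∀ t : TensorAlgebra K g, ∀ p : (Fin n → ℕ) →₀ K,
      theta bs f (ρU (RingQuot.mkAlgHom K (sridharanRel K g f) t) p)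
        = RingQuot.mkAlgHom K (sridharanRel K g f) t * theta bs f p := by
    intro t
    induction t using TensorAlgebra.induction with
    | algebraMap r =>
      intro p
      rw [AlgHom.commutes, AlgHom.commutes, Module.algebraMap_end_apply, map_smul,
        Algebra.smul_def]
    | ι x =>
      intro p
      rw [hρU, RingQuot.liftAlgHom_mkAlgHom_apply, TensorAlgebra.lift_ι_apply]
      exact theta_phi bs f x p
    | mul a b ha hb =>
      intro p
      rw [map_mul, map_mul, Module.End.mul_apply, ha, hb, mul_assoc]
    | add a b ha hb =>
      intro p
      rw [map_add, map_add, LinearMap.add_apply, map_add, ha p, hb p, add_mul]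
  have hspan : ⊤ ≤ Submodule.span K (Set.range fun α => monom (gU bs f) α) := by
    intro u _
    obtain ⟨t, rfl⟩ := RingQuot.mkAlgHom_surjective K (sridharanRel K g f) u
    have hu := hsec t (E K 0)
    rw [theta_E, monom_zero, mul_one] at hu
    rw [← hu]
    rw [theta, Finsupp.linearCombination_apply]
    exact Submodule.sum_mem _ fun γ _ => Submodule.smul_mem _ _
      (Submodule.subset_span ⟨γ, rfl⟩)
  exact ⟨Module.Basis.mk hli hspan, fun α => by rw [Module.Basis.mk_apply]; rfl⟩

/-- **PBW theorem for Sridharan enveloping algebras.**  Let `g` be a Lie algebra over a field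
`K` and `f : g × g → K` a bilinear 2-cocycle (`f(x,x) = 0` and
`f(x,[y,z]) + f(z,[x,y]) + f(y,[z,x]) = 0`).  If `g` is finite-dimensional with basis
`x₁,…,xₙ`, then the Sridharan enveloping algebra
`U_f(g) = T(g)/⟨x⊗y − y⊗x − [x,y] − f(x,y)⟩` has the standard monomials
`x₁^{α₁} ⋯ xₙ^{αₙ}` as a `K`-vector space basis. -/
theorem sridharan_PBW (K : Type*) [Field K] (g : Type*) [LieRing g] [LieAlgebra K g]
    [Module.Finite K g] (n : ℕ) (bs : Module.Basis (Fin n) K g)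
    (f : g →ₗ[K] g →ₗ[K] K)
    (halt : ∀ x : g, f x x = 0)
    (hcocycle : ∀ x y z : g, f x ⁅y, z⁆ + f z ⁅x, y⁆ + f y ⁅z, x⁆ = 0) :
    ∃ b : Module.Basis (Fin n → ℕ) K (RingQuot (sridharanRel K g f)), ∀ α : Fin n → ℕ,
      b α = monom (fun i => RingQuot.mkAlgHom K (sridharanRel K g f)
              (TensorAlgebra.ι K (bs i))) α :=
  sridharan_PBW' K g n bs f halt hcocycle
end
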